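/- arXiv:1402.2597 — 5 statements merged into one kernel-verified Lean document; each statement's English description precedes it below -/
import Mathlib

section
/- Let F ⊂ ℝ^2_{≥0} be a convex body, 𝔉 = ⋃_{i≥0}(iF ∩ ℕ^2) the associated convex body semigroup, and P ∈ ℕ^2 a nonzero point. Let τ be the ray from the origin through P and suppose τ ∩ F = [A,B] is a nonempty segment with d(A) ≤ d(B), where d denotes Euclidean distance to the origin, and 0 ∉ F. Then P ∈ 𝔉 if and only if there exists k ∈ ℕ with d(P)/d(B) ≤ k ≤ d(P)/d(A). -/
open scoped Pointwise

/-- Coercion of a lattice point of `ℕ²` into the Euclidean plane. -/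
def toE2 (x : Fin 2 → ℕ) : EuclideanSpace ℝ (Fin 2) := WithLp.toLp 2 (fun i => (x i : ℝ))

/-- The convex body semigroup `𝔉 = ⋃ i, (i·F ∩ ℕ²)` of `F` in the Euclidean plane. -/
def cbSG (F : Set (EuclideanSpace ℝ (Fin 2))) : Set (Fin 2 → ℕ) :=
  {x | ∃ i : ℕ, toE2 x ∈ (i : ℝ) • F}

set_option maxHeartbeats 1000000 in
/-- Let `F` be a compact convex body in the nonnegative quadrant with
`0 ∉ F`, `𝔉` its convex body semigroup, and `P ∈ ℕ²` nonzero. If the ray `τ` from the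
origin through `P` meets `F` in the segment `[A,B]` with `d(A) ≤ d(B)`, then
`P ∈ 𝔉 ↔ ∃ k ∈ ℕ, d(P)/d(B) ≤ k ≤ d(P)/d(A)`. -/
theorem stmt3 (F : Set (EuclideanSpace ℝ (Fin 2))) (hconv : Convex ℝ F)
    (hcomp : IsCompact F) (hpos : ∀ x ∈ F, ∀ i, 0 ≤ x i)
    (h0 : (0 : EuclideanSpace ℝ (Fin 2)) ∉ F)
    (P : Fin 2 → ℕ) (hP : P ≠ 0) (A B : EuclideanSpace ℝ (Fin 2))
    (hseg : {y | ∃ t : ℝ, 0 ≤ t ∧ y = t • toE2 P} ∩ F = segment ℝ A B)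
    (hAB : ‖A‖ ≤ ‖B‖) :
    P ∈ cbSG F ↔ ∃ k : ℕ, ‖toE2 P‖ / ‖B‖ ≤ (k : ℝ) ∧ (k : ℝ) ≤ ‖toE2 P‖ / ‖A‖ := by
  have hPe0 : toE2 P ≠ 0 := by
    intro h
    apply hP
    funext i
    have : toE2 P i = 0 := by rw [h]; rfl
    simpa [toE2] using this
  have hnP : 0 < ‖toE2 P‖ := norm_pos_iff.mpr hPe0
  -- A and B are in τ ∩ F
  have hAmem : A ∈ {y | ∃ t : ℝ, 0 ≤ t ∧ y = t • toE2 P} ∩ F := by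
    rw [hseg]; exact left_mem_segment ℝ A B
  have hBmem : B ∈ {y | ∃ t : ℝ, 0 ≤ t ∧ y = t • toE2 P} ∩ F := by
    rw [hseg]; exact right_mem_segment ℝ A B
  obtain ⟨⟨a, ha0, hA⟩, hAF⟩ := hAmem
  obtain ⟨⟨b, hb0, hB⟩, hBF⟩ := hBmem
  have hapos : 0 < a := by
    rcases ha0.lt_or_eq with h | h
    · exact h
    · exfalso; apply h0; rw [hA, ← h, zero_smul] at hAF; exact hAF
  have hnA : ‖A‖ = a * ‖toE2 P‖ := by
    rw [hA, norm_smul, Real.norm_eq_abs, abs_of_pos hapos]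
  have hnB : ‖B‖ = b * ‖toE2 P‖ := by
    rw [hB, norm_smul, Real.norm_eq_abs, abs_of_nonneg hb0]
  have hab : a ≤ b := by
    rw [hnA, hnB] at hAB
    exact le_of_mul_le_mul_right hAB hnP
  have hbpos : 0 < b := lt_of_lt_of_le hapos hab
  have hcoeff : ∀ s t : ℝ, s • toE2 P = t • toE2 P → s = t := by
    intro s t h
    have : (s - t) • toE2 P = 0 := by rw [sub_smul, h, sub_self]
    rcases smul_eq_zero.mp this with h' | h'
    · linarith [sub_eq_zero.mp (by linarith [h'] : s - t = 0)]
    · exact absurd h' hPe0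
  constructor
  · rintro ⟨i, hi⟩
    obtain ⟨f, hfF, hif⟩ := Set.mem_smul_set.mp hi
    have hipos : 0 < (i : ℝ) := by
      rcases Nat.eq_zero_or_pos i with h | h
      · exfalso; apply hPe0; rw [← hif, h]; simp
      · exact_mod_cast h
    have hf : f = (i : ℝ)⁻¹ • toE2 P := by
      rw [← hif, smul_smul, inv_mul_cancel₀ (ne_of_gt hipos), one_smul]
    have hfseg : f ∈ segment ℝ A B := by
      rw [← hseg]
      exact ⟨⟨(i:ℝ)⁻¹, inv_nonneg.mpr hipos.le, hf⟩, hfF⟩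
    obtain ⟨c, d, hc, hd, hcd, hsum⟩ := hfseg
    have heq : (i:ℝ)⁻¹ = c * a + d * b := by
      apply hcoeff
      rw [← hf, ← hsum, hA, hB, smul_smul, smul_smul, add_smul]
    have hie : (i:ℝ) * (c * a + d * b) = 1 := by
      rw [← heq, mul_inv_cancel₀ (ne_of_gt hipos)]
    have h1 : a ≤ c * a + d * b := by nlinarith
    have h2 : c * a + d * b ≤ b := by nlinarith
    refine ⟨i, ?_, ?_⟩
    · rw [hnB, div_le_iff₀ (by positivity)]
      nlinarith [mul_le_mul_of_nonneg_left h2 hipos.le]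
    · rw [hnA, le_div_iff₀ (by positivity)]
      nlinarith [mul_le_mul_of_nonneg_left h1 hipos.le]
  · rintro ⟨k, hk1, hk2⟩
    have hkpos : 0 < (k : ℝ) := by
      have : 0 < ‖toE2 P‖ / ‖B‖ := by rw [hnB]; positivity
      linarith
    set t : ℝ := (k : ℝ)⁻¹ with ht
    have hta : a ≤ t := by
      rw [hnA, le_div_iff₀ (by positivity)] at hk2
      rw [ht, ← one_div, le_div_iff₀ hkpos]
      have h' : a * (k : ℝ) * ‖toE2 P‖ ≤ 1 * ‖toE2 P‖ := by
        calc a * (k : ℝ) * ‖toE2 P‖ = (k : ℝ) * (a * ‖toE2 P‖) := by ring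
          _ ≤ ‖toE2 P‖ := hk2
          _ = 1 * ‖toE2 P‖ := by ring
      exact le_of_mul_le_mul_right h' hnP
    have htb : t ≤ b := by
      rw [hnB, div_le_iff₀ (by positivity)] at hk1
      rw [ht, ← one_div, div_le_iff₀ hkpos]
      have h' : 1 * ‖toE2 P‖ ≤ b * (k : ℝ) * ‖toE2 P‖ := by
        calc 1 * ‖toE2 P‖ = ‖toE2 P‖ := by ring
          _ ≤ (k : ℝ) * (b * ‖toE2 P‖) := hk1
          _ = b * (k : ℝ) * ‖toE2 P‖ := by ring
      exact le_of_mul_le_mul_right h' hnP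
    have hkt : (k : ℝ) * t = 1 := mul_inv_cancel₀ (ne_of_gt hkpos)
    clear_value t
    have hmem : t • toE2 P ∈ segment ℝ A B := by
      rcases hab.lt_or_eq with hlt | heqab
      · refine ⟨(b - t) / (b - a), (t - a) / (b - a), ?_, ?_, ?_, ?_⟩
        · apply div_nonneg (by linarith) (by linarith)
        · apply div_nonneg (by linarith) (by linarith)
        · rw [← add_div]
          rw [show b - t + (t - a) = b - a by ring]
          exact div_self (sub_ne_zero.mpr (ne_of_gt hlt))
        · rw [hA, hB, smul_smul, smul_smul, ← add_smul]
          congr 1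
          have hba : b - a ≠ 0 := by linarith
          field_simp
          ring
      · have : t = a := le_antisymm (by rw [heqab]; exact htb) hta
        rw [this, ← hA]
        exact left_mem_segment ℝ A B
    refine ⟨k, Set.mem_smul_set.mpr ⟨t • toE2 P, ?_, ?_⟩⟩
    · rw [← hseg] at hmem; exact hmem.2
    · rw [smul_smul, hkt, one_smul]
end

section
/- Let S ⊆ ℕ^2 be a simplicial affine semigroup with extremal rays τ_1, τ_2 of its rational cone, and let n_1 ∈ S ∩ τ_1, n_2 ∈ S ∩ τ_2 be the nonzero elements of minimal norm on each ray. If the set int(𝒞) \ int(S) is a non-empty finite set, where 𝒞 = L_{ℚ≥}(S) ∩ ℕ^2 and int denotes removal of the boundary rays, then there exists a ∈ 𝒞 \ S with a + n_1 ∈ S and a + n_2 ∈ S. -/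
open Set
open scoped Pointwise

/-- Coercion of a lattice point of `ℕ²` into `ℚ²`. -/
def toQ (x : Fin 2 → ℕ) : Fin 2 → ℚ := fun i => (x i : ℚ)

/-- The rational cone `L_{ℚ≥}(G)` generated by a subset `G ⊆ ℚ²`. -/
def coneQ (G : Set (Fin 2 → ℚ)) : Set (Fin 2 → ℚ) :=
  {x | ∃ (n : ℕ) (q : Fin n → ℚ) (f : Fin n → (Fin 2 → ℚ)),
    (∀ i, 0 ≤ q i) ∧ (∀ i, f i ∈ G) ∧ x = ∑ i, q i • f i}

/-- The ray from the origin through `v ∈ ℚ²`. -/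
def rayQ (v : Fin 2 → ℚ) : Set (Fin 2 → ℚ) := {x | ∃ q : ℚ, 0 ≤ q ∧ x = q • v}

/-- The lattice points on the ray from the origin through `v`. -/
def rayN (v : Fin 2 → ℕ) : Set (Fin 2 → ℕ) := {x | toQ x ∈ rayQ (toQ v)}

/-- Square of the Euclidean norm of a lattice point. -/
def normSq (x : Fin 2 → ℕ) : ℕ := x 0 ^ 2 + x 1 ^ 2

/-- The cone `𝒞 = L_{ℚ≥}(S) ∩ ℕ²` of a subsemigroup `S ⊆ ℕ²`. -/
def coneN (S : Set (Fin 2 → ℕ)) : Set (Fin 2 → ℕ) := {x | toQ x ∈ coneQ (toQ '' S)}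

/-- The interior `int(X)` of `X` relative to the extremal rays through `v1, v2`. -/
def interiorOf (X : Set (Fin 2 → ℕ)) (v1 v2 : Fin 2 → ℕ) : Set (Fin 2 → ℕ) :=
  X \ (rayN v1 ∪ rayN v2)

/-- `S̄ = {a ∈ ℕ² : a + g ∈ S for every generator g ∈ G}`. -/
def sbar (S : Set (Fin 2 → ℕ)) (G : Finset (Fin 2 → ℕ)) : Set (Fin 2 → ℕ) :=
  {a | ∀ g ∈ G, a + g ∈ S}

/-- `n` is the nonzero element of minimal (Euclidean) norm of `T` on the ray `τ`. -/
def IsMinOnRay (T τ : Set (Fin 2 → ℕ)) (n : Fin 2 → ℕ) : Prop :=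
  n ∈ T ∩ τ ∧ n ≠ 0 ∧ ∀ m ∈ T ∩ τ, m ≠ 0 → normSq n ≤ normSq m

/-- The Cohen–Macaulay criterion for a simplicial semigroup `T ⊆ ℕ²` with cone `C`
and extremal rays `τ1, τ2`: for the minimal elements `n1, n2` of `T` on the two rays,
every `a ∈ C \ T` satisfies `a + n1 ∉ T` or `a + n2 ∉ T`. -/
def IsCMsg (T C τ1 τ2 : Set (Fin 2 → ℕ)) : Prop :=
  ∃ n1 n2 : Fin 2 → ℕ, IsMinOnRay T τ1 n1 ∧ IsMinOnRay T τ2 n2 ∧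
    ∀ a ∈ C \ T, a + n1 ∉ T ∨ a + n2 ∉ T

/-- `S` is Buchsbaum iff (Rosales) the semigroup `S̄` is Cohen–Macaulay. -/
def IsBuchsbaumSG (S : Set (Fin 2 → ℕ)) (G : Finset (Fin 2 → ℕ))
    (C τ1 τ2 : Set (Fin 2 → ℕ)) : Prop :=
  IsCMsg (sbar S G) C τ1 τ2

/-- A subsemigroup of `ℕ²` is generated by a single element. -/
def genByOne (T : Set (Fin 2 → ℕ)) : Prop :=
  ∃ n : Fin 2 → ℕ, T = {x | ∃ k : ℕ, x = k • n}

/-- The circle semigroup of the circle (disk) of center `(a,b)` and radius `r`. -/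
def circleSG (a b r : ℝ) : Set (Fin 2 → ℕ) :=
  {x | ∃ i : ℕ, ((x 0 : ℝ) - i * a) ^ 2 + ((x 1 : ℝ) - i * b) ^ 2 ≤ (i * r) ^ 2}

/-- The convex body semigroup `⋃ i, (i·F ∩ ℕ²)` of a convex body `F ⊆ ℚ²`. -/
def polySG (F : Set (Fin 2 → ℚ)) : Set (Fin 2 → ℕ) :=
  {x | ∃ i : ℕ, toQ x ∈ (i : ℚ) • F}

/-- `G` is a minimal generating set of the semigroup `S`. -/
def minimalGenSet (S : Set (Fin 2 → ℕ)) (G : Finset (Fin 2 → ℕ)) : Prop :=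
  (AddSubmonoid.closure (G : Set (Fin 2 → ℕ)) : Set (Fin 2 → ℕ)) = S ∧
  ∀ g ∈ G, g ∉ (AddSubmonoid.closure ((G.erase g : Finset (Fin 2 → ℕ)) :
    Set (Fin 2 → ℕ)) : Set (Fin 2 → ℕ))

/-- `S` is simplicial with extremal rays through `v1` and `v2`. -/
def Simplicial (S : Set (Fin 2 → ℕ)) (v1 v2 : Fin 2 → ℕ) : Prop :=
  v1 ≠ 0 ∧ v2 ≠ 0 ∧ rayN v1 ≠ rayN v2 ∧
  coneQ (toQ '' S) = coneQ {toQ v1, toQ v2}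

-- auxiliary lemmas

lemma mem_coneQ_pair {u w x : Fin 2 → ℚ} :
    x ∈ coneQ {u, w} ↔ ∃ α β : ℚ, 0 ≤ α ∧ 0 ≤ β ∧ x = α • u + β • w := by
  constructor
  · rintro ⟨n, q, f, hq, hf, rfl⟩
    refine ⟨∑ i, if f i = u then q i else 0, ∑ i, if f i = u then 0 else q i,
      Finset.sum_nonneg fun i _ => by split; exacts [hq i, le_rfl],
      Finset.sum_nonneg fun i _ => by split; exacts [le_rfl, hq i], ?_⟩
    rw [Finset.sum_smul, Finset.sum_smul, ← Finset.sum_add_distrib]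
    refine Finset.sum_congr rfl fun i _ => ?_
    by_cases h : f i = u
    · simp [h]
    · have hw : f i = w := (hf i).resolve_left h
      have hwu : w ≠ u := fun hh => h (hw.trans hh)
      simp [hw, hwu]
  · rintro ⟨α, β, hα, hβ, rfl⟩
    refine ⟨2, ![α, β], ![u, w], fun i => ?_, fun i => ?_, by
      simp [Fin.sum_univ_two]⟩
    · fin_cases i <;> simpa
    · fin_cases i <;> simp

lemma toQ_add (x y : Fin 2 → ℕ) : toQ (x + y) = toQ x + toQ y := by
  funext i; simp [toQ]

lemma exists_pos_coord {v : Fin 2 → ℕ} (hv : v ≠ 0) : ∃ i, 0 < v i := by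
  by_contra h
  push_neg at h
  exact hv (funext fun i => Nat.le_zero.mp (h i))

lemma rayN_eq_of_smul {v1 v2 : Fin 2 → ℕ} (hv2 : v2 ≠ 0) {c : ℚ}
    (h : toQ v2 = c • toQ v1) : rayN v1 = rayN v2 := by
  obtain ⟨i, hi⟩ := exists_pos_coord hv2
  have hvi : (0 : ℚ) < (v2 i : ℚ) := by exact_mod_cast hi
  have hci : (v2 i : ℚ) = c * (v1 i : ℚ) := by
    have := congrFun h i; simpa [toQ] using this
  have hv1i : (0 : ℚ) ≤ (v1 i : ℚ) := by positivity
  have hc : 0 < c := by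
    rcases lt_trichotomy c 0 with h' | h' | h'
    · nlinarith
    · nlinarith
    · exact h'
  have hray : rayQ (toQ v1) = rayQ (toQ v2) := by
    ext y
    constructor
    · rintro ⟨t, ht, rfl⟩
      refine ⟨t / c, div_nonneg ht hc.le, ?_⟩
      rw [h, smul_smul]
      congr 1
      field_simp
    · rintro ⟨t, ht, rfl⟩
      exact ⟨t * c, mul_nonneg ht hc.le, by rw [h, smul_smul]⟩
  unfold rayN
  rw [hray]

lemma not_mem_rays {v1 v2 : Fin 2 → ℕ} (hv1 : v1 ≠ 0) (hv2 : v2 ≠ 0)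
    (hne : rayN v1 ≠ rayN v2) {x : Fin 2 → ℕ} {α β : ℚ} (hα : 0 < α) (hβ : 0 < β)
    (hx : toQ x = α • toQ v1 + β • toQ v2) : x ∉ rayN v1 ∪ rayN v2 := by
  rintro (⟨q, hq0, hq⟩ | ⟨q, hq0, hq⟩)
  · have h1 : β • toQ v2 = (q - α) • toQ v1 := by
      have := hq.symm.trans hx
      funext i
      have := congrFun this i
      simp only [Pi.smul_apply, smul_eq_mul, Pi.add_apply] at this ⊢
      linarith
    have h2 : toQ v2 = (β⁻¹ * (q - α)) • toQ v1 := by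
      have := congrArg (fun y => β⁻¹ • y) h1
      simpa [smul_smul, inv_mul_cancel₀ hβ.ne'] using this
    exact hne (rayN_eq_of_smul hv2 h2)
  · have h1 : α • toQ v1 = (q - β) • toQ v2 := by
      have := hq.symm.trans hx
      funext i
      have := congrFun this i
      simp only [Pi.smul_apply, smul_eq_mul, Pi.add_apply] at this ⊢
      linarith
    have h2 : toQ v1 = (α⁻¹ * (q - β)) • toQ v2 := by
      have := congrArg (fun y => α⁻¹ • y) h1
      simpa [smul_smul, inv_mul_cancel₀ hα.ne'] using this
    exact hne (rayN_eq_of_smul hv1 h2).symm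


/-- If `S ⊆ ℕ²` is a simplicial affine semigroup whose set
`int(𝒞) \ int(S)` is non-empty and finite, then there is `a ∈ 𝒞 \ S` with
`a + n_1 ∈ S` and `a + n_2 ∈ S` (so `S` is not Cohen–Macaulay). -/
theorem stmt4 (S : Set (Fin 2 → ℕ)) (G : Finset (Fin 2 → ℕ))
    (hG : (AddSubmonoid.closure (G : Set (Fin 2 → ℕ)) : Set (Fin 2 → ℕ)) = S)
    (v1 v2 n1 n2 : Fin 2 → ℕ) (hsimp : Simplicial S v1 v2)
    (hn1 : IsMinOnRay S (rayN v1) n1) (hn2 : IsMinOnRay S (rayN v2) n2)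
    (hfin : (interiorOf (coneN S) v1 v2 \ interiorOf S v1 v2).Finite)
    (hne : (interiorOf (coneN S) v1 v2 \ interiorOf S v1 v2).Nonempty) :
    ∃ a ∈ coneN S \ S, a + n1 ∈ S ∧ a + n2 ∈ S := by
  obtain ⟨hv1, hv2, hrays, hcone⟩ := hsimp
  -- membership characterization of the cone
  have hmemC : ∀ x : Fin 2 → ℕ,
      x ∈ coneN S ↔ ∃ α β : ℚ, 0 ≤ α ∧ 0 ≤ β ∧ toQ x = α • toQ v1 + β • toQ v2 := by
    intro x
    show toQ x ∈ coneQ (toQ '' S) ↔ _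
    rw [hcone, mem_coneQ_pair]
  -- the difference set
  have hDeq : interiorOf (coneN S) v1 v2 \ interiorOf S v1 v2 =
      {x | x ∈ coneN S ∧ x ∉ rayN v1 ∪ rayN v2 ∧ x ∉ S} := by
    ext x
    simp only [interiorOf, mem_diff, mem_setOf_eq]
    tauto
  rw [hDeq] at hfin hne
  -- choose a maximizing the coordinate sum
  obtain ⟨a, haD, hmax⟩ := Set.Finite.exists_maximalFor (fun x => x 0 + x 1) {x | x ∈ coneN S ∧ x ∉ rayN v1 ∪ rayN v2 ∧ x ∉ S} hfin hne
  obtain ⟨haC, haR, haS⟩ := haD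
  obtain ⟨α, β, hα0, hβ0, hab⟩ := (hmemC a).mp haC
  have hα : 0 < α := by
    rcases hα0.lt_or_eq with h | h
    · exact h
    · exfalso
      exact haR (Or.inr ⟨β, hβ0, by rw [hab, ← h]; simp⟩)
  have hβ : 0 < β := by
    rcases hβ0.lt_or_eq with h | h
    · exact h
    · exfalso
      exact haR (Or.inl ⟨α, hα0, by rw [hab, ← h]; simp⟩)
  -- key step: a + n ∈ S for n the minimal elements
  have key : ∀ n : Fin 2 → ℕ, n ≠ 0 →
      (a + n ∈ coneN S) → (a + n ∉ rayN v1 ∪ rayN v2) → a + n ∈ S := by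
    intro n hn hC hR
    by_contra hS
    have hmem : a + n ∈ {x | x ∈ coneN S ∧ x ∉ rayN v1 ∪ rayN v2 ∧ x ∉ S} :=
      ⟨hC, hR, hS⟩
    have hle : a 0 + a 1 ≤ (a + n) 0 + (a + n) 1 := by
      simp only [Pi.add_apply]; omega
    have heq : a 0 + a 1 = (a + n) 0 + (a + n) 1 := le_antisymm hle (hmax hmem hle)
    have hnpos : 0 < n 0 + n 1 := by
      by_contra h
      push_neg at h
      exact hn (funext fun i => by fin_cases i <;> simp <;> omega)
    simp only [Pi.add_apply] at heq
    omega
  -- a + n1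
  obtain ⟨q1, hq10, hq1⟩ := hn1.1.2
  have hd1 : toQ (a + n1) = (α + q1) • toQ v1 + β • toQ v2 := by
    rw [toQ_add, hab, hq1, add_smul]
    abel
  have h1C : a + n1 ∈ coneN S :=
    (hmemC _).mpr ⟨α + q1, β, by positivity, hβ0, hd1⟩
  have h1R : a + n1 ∉ rayN v1 ∪ rayN v2 :=
    not_mem_rays hv1 hv2 hrays (by positivity) hβ hd1
  obtain ⟨q2, hq20, hq2⟩ := hn2.1.2
  have hd2 : toQ (a + n2) = α • toQ v1 + (β + q2) • toQ v2 := by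
    rw [toQ_add, hab, hq2, add_smul]
    abel
  have h2C : a + n2 ∈ coneN S :=
    (hmemC _).mpr ⟨α, β + q2, hα0, by positivity, hd2⟩
  have h2R : a + n2 ∉ rayN v1 ∪ rayN v2 :=
    not_mem_rays hv1 hv2 hrays hα (by positivity) hd2
  exact ⟨a, ⟨haC, haS⟩, key n1 hn1.2.1 h1C h1R, key n2 hn2.2.1 h2C h2R⟩
end

section
/- Let 𝔖 ⊂ ℕ^2 be a simplicial affine circle semigroup with minimal generating set {n_1,…,n_m}, cone 𝒞, extremal rays τ_1, τ_2, and 𝔖̄ = {a ∈ ℕ^2 : a + n_i ∈ 𝔖 for all i}. Then 𝔖 is Buchsbaum if and only if int(𝒞) = int(𝔖̄) and 𝔖̄ ∩ τ_j is generated by a single element for j = 1, 2. -/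
open Set
open scoped Pointwise

namespace Stmt6

abbrev PP := Fin 2 → ℕ
abbrev QQ := Fin 2 → ℚ

/-! ### basics -/

@[simp] lemma toQ_apply (x : PP) (i : Fin 2) : toQ x i = (x i : ℚ) := rfl

lemma toQ_zero : toQ (0 : PP) = 0 := by funext i; simp [toQ]

lemma toQ_add (x y : PP) : toQ (x + y) = toQ x + toQ y := by
  funext i; simp [toQ]

lemma toQ_inj {x y : PP} (h : toQ x = toQ y) : x = y := by
  funext i
  have := congrFun h i
  simpa [toQ] using this

lemma toQ_eq_zero {x : PP} (h : toQ x = 0) : x = 0 :=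
  toQ_inj (by rw [h, toQ_zero])

lemma toQ_nsmul (k : ℕ) (x : PP) : toQ (k • x) = (k : ℚ) • toQ x := by
  funext i; simp [toQ]

lemma ne_zero_coord {x : PP} (h : x ≠ 0) : ∃ i, x i ≠ 0 := Function.ne_iff.mp h

lemma normSq_nsmul (k : ℕ) (x : PP) : normSq (k • x) = k ^ 2 * normSq x := by
  simp only [normSq, Pi.smul_apply, smul_eq_mul]; ring

lemma normSq_add_lt {x n : PP} (hn : n ≠ 0) : normSq x < normSq (x + n) := by
  obtain ⟨i, hi⟩ := ne_zero_coord hn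
  simp only [normSq, Pi.add_apply]
  fin_cases i
  · have h1 : 1 ≤ n 0 := Nat.one_le_iff_ne_zero.mpr (by simpa using hi)
    have h2 : 1 * 1 ≤ n 0 * n 0 := Nat.mul_le_mul h1 h1
    nlinarith [Nat.zero_le (x 0 * n 0), Nat.zero_le (x 1 * n 1), Nat.zero_le (n 1 * n 1)]
  · have h1 : 1 ≤ n 1 := Nat.one_le_iff_ne_zero.mpr (by simpa using hi)
    have h2 : 1 * 1 ≤ n 1 * n 1 := Nat.mul_le_mul h1 h1
    nlinarith [Nat.zero_le (x 0 * n 0), Nat.zero_le (x 1 * n 1), Nat.zero_le (n 0 * n 0)]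

def dQ (x y : QQ) : ℚ := x 0 * y 1 - x 1 * y 0

lemma dQ_self (u : QQ) : dQ u u = 0 := by simp [dQ, mul_comm]

/-! ### coneQ -/

lemma mem_coneQ_self {T : Set QQ} {t : QQ} (ht : t ∈ T) : t ∈ coneQ T :=
  ⟨1, fun _ => 1, fun _ => t, fun _ => zero_le_one, fun _ => ht, by simp⟩

lemma mem_coneQ_pair {u w : QQ} {α β : ℚ} (hα : 0 ≤ α) (hβ : 0 ≤ β) :
    α • u + β • w ∈ coneQ {u, w} := by
  refine ⟨2, ![α, β], ![u, w], ?_, ?_, ?_⟩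
  · intro i; fin_cases i <;> simpa
  · intro i; fin_cases i <;> simp
  · simp [Fin.sum_univ_two]

lemma coneQ_pair_iff {u w x : QQ} :
    x ∈ coneQ {u, w} ↔ ∃ α β : ℚ, 0 ≤ α ∧ 0 ≤ β ∧ x = α • u + β • w := by
  constructor
  · rintro ⟨n, q, f, hq, hf, rfl⟩
    classical
    refine ⟨∑ i ∈ Finset.univ.filter (fun i => f i = u), q i,
            ∑ i ∈ Finset.univ.filter (fun i => ¬ f i = u), q i,
            Finset.sum_nonneg (fun i _ => hq i),
            Finset.sum_nonneg (fun i _ => hq i), ?_⟩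
    rw [← Finset.sum_filter_add_sum_filter_not Finset.univ (fun i => f i = u)
        (fun i => q i • f i)]
    congr 1
    · rw [Finset.sum_smul]
      refine Finset.sum_congr rfl (fun i hi => ?_)
      rw [(Finset.mem_filter.mp hi).2]
    · rw [Finset.sum_smul]
      refine Finset.sum_congr rfl (fun i hi => ?_)
      have hne := (Finset.mem_filter.mp hi).2
      have : f i = w := by
        rcases hf i with h | h
        · exact absurd h hne
        · exact h
      rw [this]
  · rintro ⟨α, β, hα, hβ, rfl⟩
    exact mem_coneQ_pair hα hβ

lemma coneQ_induction {T : Set QQ} {x : QQ} (hx : x ∈ coneQ T) (P : QQ → Prop)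
    (h0 : P 0) (hs : ∀ t ∈ T, ∀ q : ℚ, 0 ≤ q → P (q • t))
    (hadd : ∀ y z, P y → P z → P (y + z)) : P x := by
  obtain ⟨n, q, f, hq, hf, rfl⟩ := hx
  exact Finset.sum_induction _ P (fun a b ha hb => hadd a b ha hb) h0
    (fun i _ => hs (f i) (hf i) (q i) (hq i))

/-! ### coordinates w.r.t. a basis -/

lemma repr_eq {u w : QQ} (hd : dQ u w ≠ 0) (x : QQ) :
    x = (dQ x w / dQ u w) • u + (dQ u x / dQ u w) • w := by
  have hd' : u 0 * w 1 - u 1 * w 0 ≠ 0 := hd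
  funext i
  fin_cases i <;>
  · simp only [Fin.zero_eta, Fin.mk_one, dQ, Pi.add_apply, Pi.smul_apply, smul_eq_mul]
    rw [div_mul_eq_mul_div, div_mul_eq_mul_div, ← add_div, eq_div_iff hd']
    ring

lemma coord_spec {u w : QQ} (hd : dQ u w ≠ 0) {x : QQ} {α β : ℚ}
    (h : x = α • u + β • w) : dQ x w / dQ u w = α ∧ dQ u x / dQ u w = β := by
  have hd' : u 0 * w 1 - u 1 * w 0 ≠ 0 := hd
  subst h
  constructor <;>
  · simp only [dQ, Pi.add_apply, Pi.smul_apply, smul_eq_mul]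
    rw [div_eq_iff hd']
    ring

lemma dQ_smul_right (u t : QQ) (q : ℚ) : dQ u (q • t) = q * dQ u t := by
  simp only [dQ, Pi.smul_apply, smul_eq_mul]; ring

lemma dQ_smul_left (u t : QQ) (q : ℚ) : dQ (q • u) t = q * dQ u t := by
  simp only [dQ, Pi.smul_apply, smul_eq_mul]; ring

lemma dQ_add_right (u x y : QQ) : dQ u (x + y) = dQ u x + dQ u y := by
  simp only [dQ, Pi.add_apply]; ring

lemma dQ_add_left (x y u : QQ) : dQ (x + y) u = dQ x u + dQ y u := by
  simp only [dQ, Pi.add_apply]; ring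

lemma dQ_zero_right (u : QQ) : dQ u 0 = 0 := by simp [dQ]

lemma dQ_zero_left (u : QQ) : dQ 0 u = 0 := by simp [dQ]

/-! ### rays -/

lemma mem_rayN {v x : PP} : x ∈ rayN v ↔ ∃ q : ℚ, 0 ≤ q ∧ toQ x = q • toQ v := Iff.rfl

lemma rayN_add {v x y : PP} (hx : x ∈ rayN v) (hy : y ∈ rayN v) : x + y ∈ rayN v := by
  obtain ⟨q, hq, hqe⟩ := hx
  obtain ⟨p, hp, hpe⟩ := hy
  exact ⟨q + p, by linarith, by rw [toQ_add, hqe, hpe, add_smul]⟩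

lemma rayN_nsmul {v n : PP} (hn : n ∈ rayN v) (k : ℕ) : k • n ∈ rayN v := by
  obtain ⟨q, hq, hqe⟩ := hn
  exact ⟨k * q, by positivity, by rw [toQ_nsmul, hqe, smul_smul]⟩

lemma zero_mem_rayN (v : PP) : (0 : PP) ∈ rayN v :=
  ⟨0, le_refl 0, by rw [toQ_zero, zero_smul]⟩

lemma d_ne_zero {v1 v2 : PP} (h1 : v1 ≠ 0) (h2 : v2 ≠ 0) (hray : rayN v1 ≠ rayN v2) :
    dQ (toQ v1) (toQ v2) ≠ 0 := by
  intro hd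
  apply hray
  have e : (v1 0 : ℚ) * (v2 1 : ℚ) = (v1 1 : ℚ) * (v2 0 : ℚ) := by
    have h' : (v1 0 : ℚ) * (v2 1 : ℚ) - (v1 1 : ℚ) * (v2 0 : ℚ) = 0 := hd
    linarith
  have hc : ∃ c : ℚ, 0 < c ∧ toQ v2 = c • toQ v1 := by
    rcases Nat.eq_zero_or_pos (v1 0) with hz | hpos
    · have h11 : v1 1 ≠ 0 := by
        intro h'
        apply h1; funext i; fin_cases i <;> simp [hz, h']
      have h11' : (v1 1 : ℚ) ≠ 0 := Nat.cast_ne_zero.mpr h11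
      have hw0 : (v2 0 : ℚ) = 0 := by
        rw [hz] at e; simp at e
        rcases e with e | e
        · exact absurd e h11
        · exact_mod_cast e
      refine ⟨(v2 1 : ℚ) / (v1 1 : ℚ), ?_, ?_⟩
      · rcases Nat.eq_zero_or_pos (v2 1) with hz2 | hpos2
        · exfalso; apply h2; funext i; fin_cases i
          · exact_mod_cast hw0
          · exact hz2
        · have : (0:ℚ) < (v2 1 : ℚ) := by exact_mod_cast hpos2
          positivity
      · have hco0 : (v2 0 : ℚ) = (v2 1 : ℚ) / (v1 1 : ℚ) * (v1 0 : ℚ) := by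
          rw [hw0, hz]; push_cast; ring
        have hco1 : (v2 1 : ℚ) = (v2 1 : ℚ) / (v1 1 : ℚ) * (v1 1 : ℚ) := by
          field_simp
        funext i; fin_cases i
        · exact hco0
        · exact hco1
    · have h00n : v1 0 ≠ 0 := Nat.pos_iff_ne_zero.mp hpos
      have h00 : (v1 0 : ℚ) ≠ 0 := Nat.cast_ne_zero.mpr h00n
      refine ⟨(v2 0 : ℚ) / (v1 0 : ℚ), ?_, ?_⟩
      · rcases Nat.eq_zero_or_pos (v2 0) with hz2 | hpos2
        · exfalso; apply h2; funext i; fin_cases i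
          · exact hz2
          · have hz2' : (v2 0 : ℚ) = 0 := by exact_mod_cast hz2
            rw [hz2'] at e; simp at e
            rcases e with e | e
            · exact absurd e h00n
            · exact e
        · have h0' : (0:ℚ) < (v2 0 : ℚ) := by exact_mod_cast hpos2
          have h1' : (0:ℚ) < (v1 0 : ℚ) := by exact_mod_cast hpos
          positivity
      · have hco0 : (v2 0 : ℚ) = (v2 0 : ℚ) / (v1 0 : ℚ) * (v1 0 : ℚ) := by
          field_simp
        have hco1 : (v2 1 : ℚ) = (v2 0 : ℚ) / (v1 0 : ℚ) * (v1 1 : ℚ) := by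
          field_simp
          linarith [e]
        funext i; fin_cases i
        · exact hco0
        · exact hco1
  obtain ⟨c, hc0, hce⟩ := hc
  ext x
  simp only [mem_rayN]
  constructor
  · rintro ⟨q, hq, he⟩
    refine ⟨q / c, by positivity, ?_⟩
    rw [hce, smul_smul, he]
    congr 1
    field_simp
  · rintro ⟨q, hq, he⟩
    exact ⟨q * c, by positivity, by rw [he, hce, smul_smul]⟩

/-! ### coordinates on lattice points -/

noncomputable def cA (v1 v2 x : PP) : ℚ := dQ (toQ x) (toQ v2) / dQ (toQ v1) (toQ v2)

noncomputable def cB (v1 v2 x : PP) : ℚ := dQ (toQ v1) (toQ x) / dQ (toQ v1) (toQ v2)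

lemma reprP {v1 v2 : PP} (hd : dQ (toQ v1) (toQ v2) ≠ 0) (x : PP) :
    toQ x = cA v1 v2 x • toQ v1 + cB v1 v2 x • toQ v2 := repr_eq hd (toQ x)

lemma coordP {v1 v2 x : PP} (hd : dQ (toQ v1) (toQ v2) ≠ 0) {α β : ℚ}
    (h : toQ x = α • toQ v1 + β • toQ v2) : cA v1 v2 x = α ∧ cB v1 v2 x = β :=
  coord_spec hd h

lemma cA_add (v1 v2 x y : PP) : cA v1 v2 (x + y) = cA v1 v2 x + cA v1 v2 y := by
  unfold cA
  rw [toQ_add, dQ_add_left, add_div]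

lemma cB_add (v1 v2 x y : PP) : cB v1 v2 (x + y) = cB v1 v2 x + cB v1 v2 y := by
  unfold cB
  rw [toQ_add, dQ_add_right, add_div]

lemma mem_ray1_iff {v1 v2 x : PP} (hd : dQ (toQ v1) (toQ v2) ≠ 0) :
    x ∈ rayN v1 ↔ cB v1 v2 x = 0 ∧ 0 ≤ cA v1 v2 x := by
  constructor
  · rintro ⟨q, hq, he⟩
    have he' : toQ x = q • toQ v1 + (0:ℚ) • toQ v2 := by rw [he]; simp
    obtain ⟨hA, hB⟩ := coordP hd he'
    exact ⟨hB, hA ▸ hq⟩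
  · rintro ⟨hb, ha⟩
    refine ⟨cA v1 v2 x, ha, ?_⟩
    have h' := reprP hd x
    rw [hb] at h'
    simpa using h'

lemma mem_ray2_iff {v1 v2 x : PP} (hd : dQ (toQ v1) (toQ v2) ≠ 0) :
    x ∈ rayN v2 ↔ cA v1 v2 x = 0 ∧ 0 ≤ cB v1 v2 x := by
  constructor
  · rintro ⟨q, hq, he⟩
    have he' : toQ x = (0:ℚ) • toQ v1 + q • toQ v2 := by rw [he]; simp
    obtain ⟨hA, hB⟩ := coordP hd he'
    exact ⟨hA, hB ▸ hq⟩
  · rintro ⟨ha, hb⟩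
    refine ⟨cB v1 v2 x, hb, ?_⟩
    have h' := reprP hd x
    rw [ha] at h'
    simpa using h'

lemma eq_zero_of_coords {v1 v2 x : PP} (hd : dQ (toQ v1) (toQ v2) ≠ 0)
    (ha : cA v1 v2 x = 0) (hb : cB v1 v2 x = 0) : x = 0 := by
  apply toQ_eq_zero
  rw [reprP hd x, ha, hb]
  simp

lemma S_mem_coneN {S : Set PP} {x : PP} (hx : x ∈ S) : x ∈ coneN S :=
  mem_coneQ_self ⟨x, hx, rfl⟩

lemma mem_coneN_iff {S : Set PP} {v1 v2 x : PP} (hd : dQ (toQ v1) (toQ v2) ≠ 0)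
    (hC : coneQ (toQ '' S) = coneQ {toQ v1, toQ v2}) :
    x ∈ coneN S ↔ 0 ≤ cA v1 v2 x ∧ 0 ≤ cB v1 v2 x := by
  show toQ x ∈ coneQ (toQ '' S) ↔ _
  rw [hC, coneQ_pair_iff]
  constructor
  · rintro ⟨α, β, hα, hβ, he⟩
    obtain ⟨hA, hB⟩ := coordP hd he
    exact ⟨hA ▸ hα, hB ▸ hβ⟩
  · rintro ⟨ha, hb⟩
    exact ⟨_, _, ha, hb, reprP hd x⟩

lemma mem_int_iff {S : Set PP} {v1 v2 x : PP} (hd : dQ (toQ v1) (toQ v2) ≠ 0)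
    (hC : coneQ (toQ '' S) = coneQ {toQ v1, toQ v2}) :
    x ∈ interiorOf (coneN S) v1 v2 ↔ 0 < cA v1 v2 x ∧ 0 < cB v1 v2 x := by
  simp only [interiorOf, Set.mem_diff, Set.mem_union, mem_coneN_iff hd hC,
    mem_ray1_iff (v2 := v2) hd, mem_ray2_iff (v1 := v1) hd]
  constructor
  · rintro ⟨⟨ha, hb⟩, hn⟩
    constructor
    · rcases eq_or_lt_of_le ha with h | h
      · exact absurd (Or.inr ⟨h.symm, hb⟩) hn
      · exact h
    · rcases eq_or_lt_of_le hb with h | h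
      · exact absurd (Or.inl ⟨h.symm, ha⟩) hn
      · exact h
  · rintro ⟨ha, hb⟩
    refine ⟨⟨ha.le, hb.le⟩, ?_⟩
    rintro (⟨h, -⟩ | ⟨h, -⟩)
    · exact hb.ne' h
    · exact ha.ne' h

lemma normSq_cast_ray {v x : PP} {q : ℚ} (h : toQ x = q • toQ v) :
    (normSq x : ℚ) = q ^ 2 * (normSq v : ℚ) := by
  have h0 := congrFun h 0
  have h1 := congrFun h 1
  simp only [toQ_apply, Pi.smul_apply, smul_eq_mul] at h0 h1
  unfold normSq
  push_cast
  rw [h0, h1]; ring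

lemma normSq_pos {x : PP} (h : x ≠ 0) : 0 < normSq x := by
  obtain ⟨i, hi⟩ := ne_zero_coord h
  unfold normSq
  fin_cases i
  · have h1 : 1 ≤ x 0 := Nat.one_le_iff_ne_zero.mpr (by simpa using hi)
    have h2 : 1 * 1 ≤ x 0 * x 0 := Nat.mul_le_mul h1 h1
    nlinarith [Nat.zero_le (x 1 * x 1)]
  · have h1 : 1 ≤ x 1 := Nat.one_le_iff_ne_zero.mpr (by simpa using hi)
    have h2 : 1 * 1 ≤ x 1 * x 1 := Nat.mul_le_mul h1 h1
    nlinarith [Nat.zero_le (x 0 * x 0)]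
/-! ### the semigroup S and sbar -/

section Mon

variable {S : Set PP} {G : Finset PP}

lemma S_zero (hG : minimalGenSet S G) : (0 : PP) ∈ S := by
  rw [← hG.1]
  exact AddSubmonoid.zero_mem _

lemma S_add (hG : minimalGenSet S G) {x y : PP} (hx : x ∈ S) (hy : y ∈ S) :
    x + y ∈ S := by
  rw [← hG.1] at hx hy ⊢
  exact AddSubmonoid.add_mem _ hx hy

lemma G_sub_S (hG : minimalGenSet S G) {g : PP} (hg : g ∈ G) : g ∈ S := by
  rw [← hG.1]
  exact AddSubmonoid.subset_closure hg

lemma G_ne_zero (hG : minimalGenSet S G) {g : PP} (hg : g ∈ G) : g ≠ 0 := by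
  intro h
  apply hG.2 g hg
  rw [h]
  exact AddSubmonoid.zero_mem _

lemma S_decomp (hG : minimalGenSet S G) {x : PP} (hx : x ∈ S) (hx0 : x ≠ 0) :
    ∃ g ∈ G, ∃ s ∈ S, x = g + s := by
  rw [← hG.1] at hx
  have key : x = 0 ∨ ∃ g ∈ G, ∃ s ∈ S, x = g + s := by
    clear hx0
    induction hx using AddSubmonoid.closure_induction with
    | mem g hg => exact Or.inr ⟨g, hg, 0, S_zero hG, (add_zero g).symm⟩
    | zero => exact Or.inl rfl
    | add x y hx hy ihx ihy =>
      rcases ihx with rfl | ⟨g, hg, s, hs, rfl⟩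
      · rw [zero_add]; exact ihy
      · have hyS : y ∈ S := by rw [← hG.1]; exact hy
        exact Or.inr ⟨g, hg, s + y, S_add hG hs hyS, by rw [add_assoc]⟩
  rcases key with rfl | h
  · exact absurd rfl hx0
  · exact h

lemma S_sub_sbar (hG : minimalGenSet S G) : S ⊆ sbar S G :=
  fun s hs g hg => S_add hG hs (G_sub_S hG hg)

lemma zero_mem_sbar (hG : minimalGenSet S G) : (0 : PP) ∈ sbar S G := by
  intro g hg
  simpa using G_sub_S hG hg

lemma sbar_absorb (hG : minimalGenSet S G) {x s : PP} (hx : x ∈ sbar S G)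
    (hs : s ∈ S) (hs0 : s ≠ 0) : x + s ∈ S := by
  obtain ⟨g, hg, s', hs', rfl⟩ := S_decomp hG hs hs0
  have h1 : x + g ∈ S := hx g hg
  have h2 := S_add hG h1 hs'
  rwa [add_assoc] at h2

lemma add_ne_zero_right {x g : PP} (hg : g ≠ 0) : x + g ≠ 0 := by
  obtain ⟨i, hi⟩ := ne_zero_coord hg
  intro h
  have h' := congrFun h i
  simp only [Pi.add_apply, Pi.zero_apply] at h'
  exact hi (by omega)

lemma sbar_add (hG : minimalGenSet S G) {x y : PP} (hx : x ∈ sbar S G)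
    (hy : y ∈ sbar S G) : x + y ∈ sbar S G := by
  intro g hg
  have hyg : y + g ∈ S := hy g hg
  have hne : y + g ≠ 0 := add_ne_zero_right (G_ne_zero hG hg)
  have h2 := sbar_absorb hG hx hyg hne
  rwa [← add_assoc] at h2

lemma sbar_nsmul (hG : minimalGenSet S G) {n : PP} (hn : n ∈ sbar S G) (k : ℕ) :
    k • n ∈ sbar S G := by
  induction k with
  | zero => simpa using zero_mem_sbar hG
  | succ k ih =>
    rw [succ_nsmul]
    exact sbar_add hG ih hn

end Mon

/-! ### nonzero S-elements on the extremal rays -/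

lemma exists_ray_elt1 {S : Set PP} {v1 v2 : PP} (h1 : v1 ≠ 0)
    (hd : dQ (toQ v1) (toQ v2) ≠ 0)
    (hC : coneQ (toQ '' S) = coneQ {toQ v1, toQ v2}) :
    ∃ s, s ∈ S ∧ s ∈ rayN v1 ∧ s ≠ 0 := by
  have hu : toQ v1 ∈ coneQ (toQ '' S) := by
    rw [hC]
    have h' := mem_coneQ_pair (u := toQ v1) (w := toQ v2) zero_le_one le_rfl
    simpa using h' 
  have hbase : ∀ t ∈ toQ '' S, ∀ q : ℚ, 0 ≤ q →
      (0 ≤ dQ (toQ v1) (q • t) / dQ (toQ v1) (toQ v2) ∧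
        (dQ (toQ v1) (q • t) / dQ (toQ v1) (toQ v2) = 0 →
          q • t = 0 ∨ ∃ s, s ∈ S ∧ s ∈ rayN v1 ∧ s ≠ 0)) := by
    rintro t ⟨s, hsS, rfl⟩ q hq
    have hts : toQ s ∈ coneQ {toQ v1, toQ v2} := by
      rw [← hC]; exact mem_coneQ_self ⟨s, hsS, rfl⟩
    obtain ⟨α, β, hα, hβ, he⟩ := coneQ_pair_iff.mp hts
    have hco := coord_spec hd he
    have hlin : dQ (toQ v1) (q • toQ s) / dQ (toQ v1) (toQ v2)
        = q * (dQ (toQ v1) (toQ s) / dQ (toQ v1) (toQ v2)) := by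
      rw [dQ_smul_right, mul_div_assoc]
    constructor
    · rw [hlin, hco.2]
      exact mul_nonneg hq hβ
    · intro hz
      rw [hlin, hco.2] at hz
      rcases mul_eq_zero.mp hz with rfl | hβ0
      · exact Or.inl (by simp)
      · by_cases hs0 : s = 0
        · subst hs0
          exact Or.inl (by rw [toQ_zero, smul_zero])
        · refine Or.inr ⟨s, hsS, ⟨α, hα, ?_⟩, hs0⟩
          rw [he, hβ0]
          simp
  have haddP : ∀ y z : QQ,
      (0 ≤ dQ (toQ v1) y / dQ (toQ v1) (toQ v2) ∧
        (dQ (toQ v1) y / dQ (toQ v1) (toQ v2) = 0 →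
          y = 0 ∨ ∃ s, s ∈ S ∧ s ∈ rayN v1 ∧ s ≠ 0)) →
      (0 ≤ dQ (toQ v1) z / dQ (toQ v1) (toQ v2) ∧
        (dQ (toQ v1) z / dQ (toQ v1) (toQ v2) = 0 →
          z = 0 ∨ ∃ s, s ∈ S ∧ s ∈ rayN v1 ∧ s ≠ 0)) →
      (0 ≤ dQ (toQ v1) (y + z) / dQ (toQ v1) (toQ v2) ∧
        (dQ (toQ v1) (y + z) / dQ (toQ v1) (toQ v2) = 0 →
          y + z = 0 ∨ ∃ s, s ∈ S ∧ s ∈ rayN v1 ∧ s ≠ 0)) := by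
    rintro y z ⟨hy1, hy2⟩ ⟨hz1, hz2⟩
    have hadd : dQ (toQ v1) (y + z) / dQ (toQ v1) (toQ v2)
        = dQ (toQ v1) y / dQ (toQ v1) (toQ v2) + dQ (toQ v1) z / dQ (toQ v1) (toQ v2) := by
      rw [dQ_add_right, add_div]
    refine ⟨by rw [hadd]; exact add_nonneg hy1 hz1, ?_⟩
    intro hz0
    rw [hadd] at hz0
    have e1 : dQ (toQ v1) y / dQ (toQ v1) (toQ v2) = 0 := le_antisymm (by linarith) hy1
    have e2 : dQ (toQ v1) z / dQ (toQ v1) (toQ v2) = 0 := le_antisymm (by linarith) hz1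
    rcases hy2 e1 with rfl | hw
    · rcases hz2 e2 with rfl | hw'
      · exact Or.inl (by simp)
      · exact Or.inr hw'
    · exact Or.inr hw
  have key := coneQ_induction hu
    (fun ξ => 0 ≤ dQ (toQ v1) ξ / dQ (toQ v1) (toQ v2) ∧
      (dQ (toQ v1) ξ / dQ (toQ v1) (toQ v2) = 0 →
        ξ = 0 ∨ ∃ s, s ∈ S ∧ s ∈ rayN v1 ∧ s ≠ 0))
    ⟨by rw [dQ_zero_right, zero_div], fun _ => Or.inl rfl⟩ hbase haddP
  rcases key.2 (by rw [dQ_self, zero_div]) with h0 | hw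
  · exact absurd (toQ_eq_zero h0) h1
  · exact hw

lemma exists_ray_elt2 {S : Set PP} {v1 v2 : PP} (h2 : v2 ≠ 0)
    (hd : dQ (toQ v1) (toQ v2) ≠ 0)
    (hC : coneQ (toQ '' S) = coneQ {toQ v1, toQ v2}) :
    ∃ s, s ∈ S ∧ s ∈ rayN v2 ∧ s ≠ 0 := by
  have hu : toQ v2 ∈ coneQ (toQ '' S) := by
    rw [hC]
    have h' := mem_coneQ_pair (u := toQ v1) (w := toQ v2) le_rfl zero_le_one
    simpa using h' 
  have hbase : ∀ t ∈ toQ '' S, ∀ q : ℚ, 0 ≤ q →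
      (0 ≤ dQ (q • t) (toQ v2) / dQ (toQ v1) (toQ v2) ∧
        (dQ (q • t) (toQ v2) / dQ (toQ v1) (toQ v2) = 0 →
          q • t = 0 ∨ ∃ s, s ∈ S ∧ s ∈ rayN v2 ∧ s ≠ 0)) := by
    rintro t ⟨s, hsS, rfl⟩ q hq
    have hts : toQ s ∈ coneQ {toQ v1, toQ v2} := by
      rw [← hC]; exact mem_coneQ_self ⟨s, hsS, rfl⟩
    obtain ⟨α, β, hα, hβ, he⟩ := coneQ_pair_iff.mp hts
    have hco := coord_spec hd he
    have hlin : dQ (q • toQ s) (toQ v2) / dQ (toQ v1) (toQ v2)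
        = q * (dQ (toQ s) (toQ v2) / dQ (toQ v1) (toQ v2)) := by
      rw [dQ_smul_left, mul_div_assoc]
    constructor
    · rw [hlin, hco.1]
      exact mul_nonneg hq hα
    · intro hz
      rw [hlin, hco.1] at hz
      rcases mul_eq_zero.mp hz with rfl | hα0
      · exact Or.inl (by simp)
      · by_cases hs0 : s = 0
        · subst hs0
          exact Or.inl (by rw [toQ_zero, smul_zero])
        · refine Or.inr ⟨s, hsS, ⟨β, hβ, ?_⟩, hs0⟩
          rw [he, hα0]
          simp
  have haddP : ∀ y z : QQ,
      (0 ≤ dQ y (toQ v2) / dQ (toQ v1) (toQ v2) ∧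
        (dQ y (toQ v2) / dQ (toQ v1) (toQ v2) = 0 →
          y = 0 ∨ ∃ s, s ∈ S ∧ s ∈ rayN v2 ∧ s ≠ 0)) →
      (0 ≤ dQ z (toQ v2) / dQ (toQ v1) (toQ v2) ∧
        (dQ z (toQ v2) / dQ (toQ v1) (toQ v2) = 0 →
          z = 0 ∨ ∃ s, s ∈ S ∧ s ∈ rayN v2 ∧ s ≠ 0)) →
      (0 ≤ dQ (y + z) (toQ v2) / dQ (toQ v1) (toQ v2) ∧
        (dQ (y + z) (toQ v2) / dQ (toQ v1) (toQ v2) = 0 →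
          y + z = 0 ∨ ∃ s, s ∈ S ∧ s ∈ rayN v2 ∧ s ≠ 0)) := by
    rintro y z ⟨hy1, hy2⟩ ⟨hz1, hz2⟩
    have hadd : dQ (y + z) (toQ v2) / dQ (toQ v1) (toQ v2)
        = dQ y (toQ v2) / dQ (toQ v1) (toQ v2) + dQ z (toQ v2) / dQ (toQ v1) (toQ v2) := by
      rw [dQ_add_left, add_div]
    refine ⟨by rw [hadd]; exact add_nonneg hy1 hz1, ?_⟩
    intro hz0
    rw [hadd] at hz0
    have e1 : dQ y (toQ v2) / dQ (toQ v1) (toQ v2) = 0 := le_antisymm (by linarith) hy1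
    have e2 : dQ z (toQ v2) / dQ (toQ v1) (toQ v2) = 0 := le_antisymm (by linarith) hz1
    rcases hy2 e1 with rfl | hw
    · rcases hz2 e2 with rfl | hw'
      · exact Or.inl (by simp)
      · exact Or.inr hw'
    · exact Or.inr hw
  have key := coneQ_induction hu
    (fun ξ => 0 ≤ dQ ξ (toQ v2) / dQ (toQ v1) (toQ v2) ∧
      (dQ ξ (toQ v2) / dQ (toQ v1) (toQ v2) = 0 →
        ξ = 0 ∨ ∃ s, s ∈ S ∧ s ∈ rayN v2 ∧ s ≠ 0))
    ⟨by rw [dQ_zero_left, zero_div], fun _ => Or.inl rfl⟩ hbase haddP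
  rcases key.2 (by rw [dQ_self, zero_div]) with h0 | hw
  · exact absurd (toQ_eq_zero h0) h2
  · exact hw

lemma sbar_sub_coneN {S : Set PP} {G : Finset PP} {v1 v2 : PP}
    (hG : minimalGenSet S G) (h1 : v1 ≠ 0) (h2 : v2 ≠ 0)
    (hd : dQ (toQ v1) (toQ v2) ≠ 0)
    (hC : coneQ (toQ '' S) = coneQ {toQ v1, toQ v2}) :
    sbar S G ⊆ coneN S := by
  obtain ⟨s1, hs1S, hs1ray, hs1ne⟩ := exists_ray_elt1 h1 hd hC
  obtain ⟨s2, hs2S, hs2ray, hs2ne⟩ := exists_ray_elt2 h2 hd hC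
  intro x hx
  rw [mem_coneN_iff hd hC]
  have hc1 : x + s1 ∈ coneN S := S_mem_coneN (sbar_absorb hG hx hs1S hs1ne)
  have hc2 : x + s2 ∈ coneN S := S_mem_coneN (sbar_absorb hG hx hs2S hs2ne)
  rw [mem_coneN_iff hd hC] at hc1 hc2
  have hray1 := (mem_ray1_iff (v2 := v2) hd).mp hs1ray
  have hray2 := (mem_ray2_iff (v1 := v1) hd).mp hs2ray
  constructor
  · have h := hc2.1
    rwa [cA_add, hray2.1, add_zero] at h
  · have h := hc1.2
    rwa [cB_add, hray1.1, add_zero] at h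
/-! ### real geometry of the circle semigroup -/

noncomputable def BB (a b : ℝ) (x : PP) : ℝ := (x 0 : ℝ) * a + (x 1 : ℝ) * b

noncomputable def NN (x : PP) : ℝ := (x 0 : ℝ) ^ 2 + (x 1 : ℝ) ^ 2

noncomputable def BQ (a b : ℝ) (ξ : QQ) : ℝ := (ξ 0 : ℝ) * a + (ξ 1 : ℝ) * b

noncomputable def NQ (ξ : QQ) : ℝ := (ξ 0 : ℝ) ^ 2 + (ξ 1 : ℝ) ^ 2

lemma BQ_toQ (a b : ℝ) (x : PP) : BQ a b (toQ x) = BB a b x := by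
  simp [BQ, BB, toQ]

lemma NQ_toQ (x : PP) : NQ (toQ x) = NN x := by
  simp [NQ, NN, toQ]

lemma NN_nonneg (x : PP) : 0 ≤ NN x := by unfold NN; positivity

lemma NQ_nonneg (ξ : QQ) : 0 ≤ NQ ξ := by unfold NQ; positivity

lemma mem_circle_iff (a b r : ℝ) (x : PP) :
    x ∈ circleSG a b r ↔ ∃ i : ℕ,
      (a ^ 2 + b ^ 2 - r ^ 2) * (i : ℝ) ^ 2 - 2 * BB a b x * (i : ℝ) + NN x ≤ 0 := by
  unfold circleSG BB NN
  rw [Set.mem_setOf_eq]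
  constructor <;> rintro ⟨i, hi⟩ <;> exact ⟨i, by nlinarith [hi]⟩

lemma NN_pos {x : PP} (hx : x ≠ 0) : 0 < NN x := by
  have h := normSq_pos hx
  have e : (normSq x : ℝ) = NN x := by unfold normSq NN; push_cast; ring
  rw [← e]
  exact_mod_cast h

lemma br_key {A B1 B2 N1 N2 dt : ℝ} (hA : 0 < A) (hB1 : 0 ≤ B1) (hB2 : 0 ≤ B2)
    (hg1 : 0 ≤ B1 ^ 2 - A * N1) (hg2 : 0 ≤ B2 ^ 2 - A * N2)
    (hN1 : 0 ≤ N1) (hN2 : 0 ≤ N2) (hdt : 0 ≤ dt) (hcs : dt ^ 2 ≤ N1 * N2) :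
    A * dt ≤ B1 * B2 := by
  have h1 : A * N1 ≤ B1 ^ 2 := by linarith
  have h2 : A * N2 ≤ B2 ^ 2 := by linarith
  have hsq : (A * dt) ^ 2 ≤ (B1 * B2) ^ 2 := by
    have k2 : A ^ 2 * dt ^ 2 ≤ A ^ 2 * (N1 * N2) := by nlinarith [sq_nonneg A]
    have k4 : (A * N1) * (A * N2) ≤ B1 ^ 2 * B2 ^ 2 :=
      mul_le_mul h1 h2 (by positivity) (by positivity)
    linarith [k2, k4]
  nlinarith [hsq, mul_nonneg hB1 hB2, mul_nonneg hA.le hdt]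

lemma in_S_of_g_big {a b r : ℝ} {x : PP}
    (hA : 0 < a ^ 2 + b ^ 2 - r ^ 2)
    (hB : 0 ≤ BB a b x)
    (hg : (a ^ 2 + b ^ 2 - r ^ 2) ^ 2 / 4 ≤ (BB a b x) ^ 2 - (a ^ 2 + b ^ 2 - r ^ 2) * NN x) :
    x ∈ circleSG a b r := by
  have hN : 0 ≤ NN x := NN_nonneg x
  have hB2 : (a ^ 2 + b ^ 2 - r ^ 2) / 2 ≤ BB a b x := by nlinarith
  have ht : (0:ℝ) ≤ BB a b x / (a ^ 2 + b ^ 2 - r ^ 2) - 1 / 2 := by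
    have h' : (1:ℝ) / 2 ≤ BB a b x / (a ^ 2 + b ^ 2 - r ^ 2) := by
      rw [le_div_iff₀ hA]; linarith [hB2]
    linarith
  rw [mem_circle_iff]
  refine ⟨Nat.ceil (BB a b x / (a ^ 2 + b ^ 2 - r ^ 2) - 1 / 2), ?_⟩
  set i : ℝ := (Nat.ceil (BB a b x / (a ^ 2 + b ^ 2 - r ^ 2) - 1 / 2) : ℝ) with hidef
  have h1 : BB a b x / (a ^ 2 + b ^ 2 - r ^ 2) - 1 / 2 ≤ i := Nat.le_ceil _
  have h2 : i ≤ BB a b x / (a ^ 2 + b ^ 2 - r ^ 2) + 1 / 2 := by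
    have := Nat.ceil_lt_add_one ht
    rw [← hidef] at this
    linarith
  have he : (a ^ 2 + b ^ 2 - r ^ 2) * i ^ 2 - 2 * BB a b x * i + NN x
      = (a ^ 2 + b ^ 2 - r ^ 2) * (i - BB a b x / (a ^ 2 + b ^ 2 - r ^ 2)) ^ 2
        - ((BB a b x) ^ 2 - (a ^ 2 + b ^ 2 - r ^ 2) * NN x) / (a ^ 2 + b ^ 2 - r ^ 2) := by
    field_simp
    ring
  rw [he]
  have husq : (i - BB a b x / (a ^ 2 + b ^ 2 - r ^ 2)) ^ 2 ≤ 1 / 4 := by nlinarith [h1, h2]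
  have hup : (a ^ 2 + b ^ 2 - r ^ 2) * (i - BB a b x / (a ^ 2 + b ^ 2 - r ^ 2)) ^ 2
      ≤ (a ^ 2 + b ^ 2 - r ^ 2) * (1 / 4) := by nlinarith [husq]
  have h4 : (a ^ 2 + b ^ 2 - r ^ 2) / 4
      ≤ ((BB a b x) ^ 2 - (a ^ 2 + b ^ 2 - r ^ 2) * NN x) / (a ^ 2 + b ^ 2 - r ^ 2) := by
    rw [le_div_iff₀ hA]; nlinarith [hg]
  linarith [hup, h4]
set_option maxHeartbeats 1000000 in
lemma lemmaF_neg {S : Set PP} {v1 v2 : PP} (a b r : ℝ) (hr : 0 < r)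
    (hS : S = circleSG a b r) (h1 : v1 ≠ 0) (h2 : v2 ≠ 0)
    (hd : dQ (toQ v1) (toQ v2) ≠ 0)
    (hC : coneQ (toQ '' S) = coneQ {toQ v1, toQ v2}) (hA : a ^ 2 + b ^ 2 - r ^ 2 < 0) :
    (interiorOf (coneN S) v1 v2 \ S).Finite := by
  have hall : ∀ x : PP, x ∈ S := by
    intro x
    rw [hS, mem_circle_iff]
    have hN : 0 ≤ NN x := NN_nonneg x
    refine ⟨Nat.ceil ((2 * |BB a b x| + NN x) / (-(a ^ 2 + b ^ 2 - r ^ 2))) + 1, ?_⟩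
    set i : ℕ := Nat.ceil ((2 * |BB a b x| + NN x) / (-(a ^ 2 + b ^ 2 - r ^ 2))) + 1
      with hidef
  -- (i:ℝ) ≥ 1, and i * (-A) ≥ 2|B| + N
    have hc : (2 * |BB a b x| + NN x) / (-(a ^ 2 + b ^ 2 - r ^ 2))
        ≤ (Nat.ceil ((2 * |BB a b x| + NN x) / (-(a ^ 2 + b ^ 2 - r ^ 2))) : ℝ) :=
      Nat.le_ceil _
    have hi1 : (1 : ℝ) ≤ (i : ℝ) := by
      rw [hidef]
      push_cast
      have := Nat.cast_nonneg (α := ℝ)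
        (Nat.ceil ((2 * |BB a b x| + NN x) / (-(a ^ 2 + b ^ 2 - r ^ 2))))
      linarith
    have hceil_le : (Nat.ceil ((2 * |BB a b x| + NN x) / (-(a ^ 2 + b ^ 2 - r ^ 2))) : ℝ)
        ≤ (i : ℝ) := by
      rw [hidef]; push_cast; linarith
    have hApos : (0:ℝ) < -(a ^ 2 + b ^ 2 - r ^ 2) := by linarith
    rw [div_le_iff₀ hApos] at hc
    have hi2 : 2 * |BB a b x| + NN x ≤ (i : ℝ) * (-(a ^ 2 + b ^ 2 - r ^ 2)) := by
      nlinarith [hc, hceil_le, hApos]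
    have hP1 : 0 ≤ (i:ℝ) * ((-(a ^ 2 + b ^ 2 - r ^ 2)) * (i:ℝ) - (2 * |BB a b x| + NN x)) := by
      apply mul_nonneg (by linarith)
      nlinarith [hi2]
    have hP2 : 0 ≤ 2 * (i:ℝ) * (|BB a b x| + BB a b x) := by
      have hb := neg_abs_le (BB a b x)
      apply mul_nonneg (by linarith)
      linarith
    have hP3 : 0 ≤ ((i:ℝ) - 1) * NN x := mul_nonneg (by linarith) hN
    nlinarith [hP1, hP2, hP3]
  refine Set.Finite.subset Set.finite_empty ?_
  rintro x ⟨-, hxS⟩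
  exact absurd (hall x) hxS

set_option maxHeartbeats 1000000 in
lemma lemmaF_zero {S : Set PP} {v1 v2 : PP} (a b r : ℝ) (hr : 0 < r)
    (hS : S = circleSG a b r) (h1 : v1 ≠ 0) (h2 : v2 ≠ 0)
    (hd : dQ (toQ v1) (toQ v2) ≠ 0)
    (hC : coneQ (toQ '' S) = coneQ {toQ v1, toQ v2}) (hA : a ^ 2 + b ^ 2 - r ^ 2 = 0) :
    (interiorOf (coneN S) v1 v2 \ S).Finite := by
  have hBpos : ∀ s : PP, s ∈ S → s ≠ 0 → 0 < BB a b s := by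
    intro s hsS hs0
    rw [hS, mem_circle_iff] at hsS
    obtain ⟨i, hi⟩ := hsS
    rw [hA] at hi
    have hN := NN_pos hs0
    by_contra hb
    push_neg at hb
    have h' : 0 ≤ -(2 * BB a b s) * (i:ℝ) := mul_nonneg (by linarith) (Nat.cast_nonneg i)
    linarith [hi, h']
  obtain ⟨s1, hs1S, hs1ray, hs1ne⟩ := exists_ray_elt1 h1 hd hC
  obtain ⟨s2, hs2S, hs2ray, hs2ne⟩ := exists_ray_elt2 h2 hd hC
  have hBv1 : 0 < BB a b v1 := by
    obtain ⟨q, hq, he⟩ := hs1ray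
    have hq0 : q ≠ 0 := by
      intro h
      exact hs1ne (toQ_eq_zero (by rw [he, h, zero_smul]))
    have hc0 : (s1 0 : ℝ) = (q:ℝ) * (v1 0 : ℝ) := by
      have h' := congrFun he 0
      simp only [toQ_apply, Pi.smul_apply, smul_eq_mul] at h'
      exact_mod_cast h'
    have hc1 : (s1 1 : ℝ) = (q:ℝ) * (v1 1 : ℝ) := by
      have h' := congrFun he 1
      simp only [toQ_apply, Pi.smul_apply, smul_eq_mul] at h'
      exact_mod_cast h'
    have hqR : (0:ℝ) < (q:ℝ) := by
      have h' : (0:ℚ) < q := lt_of_le_of_ne hq (Ne.symm hq0)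
      exact_mod_cast h'
    have hBs1 : BB a b s1 = (q:ℝ) * BB a b v1 := by
      unfold BB; rw [hc0, hc1]; ring
    have hp := hBpos s1 hs1S hs1ne
    rw [hBs1] at hp
    nlinarith [hp, hqR]
  have hBv2 : 0 < BB a b v2 := by
    obtain ⟨q, hq, he⟩ := hs2ray
    have hq0 : q ≠ 0 := by
      intro h
      exact hs2ne (toQ_eq_zero (by rw [he, h, zero_smul]))
    have hc0 : (s2 0 : ℝ) = (q:ℝ) * (v2 0 : ℝ) := by
      have h' := congrFun he 0
      simp only [toQ_apply, Pi.smul_apply, smul_eq_mul] at h'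
      exact_mod_cast h'
    have hc1 : (s2 1 : ℝ) = (q:ℝ) * (v2 1 : ℝ) := by
      have h' := congrFun he 1
      simp only [toQ_apply, Pi.smul_apply, smul_eq_mul] at h'
      exact_mod_cast h'
    have hqR : (0:ℝ) < (q:ℝ) := by
      have h' : (0:ℚ) < q := lt_of_le_of_ne hq (Ne.symm hq0)
      exact_mod_cast h'
    have hBs2 : BB a b s2 = (q:ℝ) * BB a b v2 := by
      unfold BB; rw [hc0, hc1]; ring
    have hp := hBpos s2 hs2S hs2ne
    rw [hBs2] at hp
    nlinarith [hp, hqR]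
  have hempty : ∀ x ∈ interiorOf (coneN S) v1 v2, x ∈ S := by
    intro x hx
    obtain ⟨hca, hcb⟩ := (mem_int_iff hd hC).mp hx
    have hrepr := reprP hd x
    have hx0 : (x 0 : ℝ) = (cA v1 v2 x : ℝ) * (v1 0:ℝ) + (cB v1 v2 x : ℝ) * (v2 0:ℝ) := by
      have h' := congrFun hrepr 0
      simp only [toQ_apply, Pi.add_apply, Pi.smul_apply, smul_eq_mul] at h'
      exact_mod_cast h'
    have hx1 : (x 1 : ℝ) = (cA v1 v2 x : ℝ) * (v1 1:ℝ) + (cB v1 v2 x : ℝ) * (v2 1:ℝ) := by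
      have h' := congrFun hrepr 1
      simp only [toQ_apply, Pi.add_apply, Pi.smul_apply, smul_eq_mul] at h'
      exact_mod_cast h'
    have hcaR : (0:ℝ) < (cA v1 v2 x : ℝ) := by exact_mod_cast hca
    have hcbR : (0:ℝ) < (cB v1 v2 x : ℝ) := by exact_mod_cast hcb
    have hBx : 0 < BB a b x := by
      have e : BB a b x
          = (cA v1 v2 x : ℝ) * BB a b v1 + (cB v1 v2 x : ℝ) * BB a b v2 := by
        unfold BB; rw [hx0, hx1]; ring
      rw [e]
      have t1 := mul_pos hcaR hBv1
      have t2 := mul_pos hcbR hBv2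
      linarith
    rw [hS, mem_circle_iff]
    refine ⟨Nat.ceil (NN x / (2 * BB a b x)), ?_⟩
    rw [hA]
    have hc := Nat.le_ceil (NN x / (2 * BB a b x))
    rw [div_le_iff₀ (by linarith)] at hc
    linarith [hc]
  refine Set.Finite.subset Set.finite_empty ?_
  rintro x ⟨hxint, hxS⟩
  exact absurd (hempty x hxint) hxS

set_option maxHeartbeats 4000000 in
lemma lemmaF_pos {S : Set PP} {v1 v2 : PP} (a b r : ℝ) (hr : 0 < r)
    (hS : S = circleSG a b r) (h1 : v1 ≠ 0) (h2 : v2 ≠ 0)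
    (hd : dQ (toQ v1) (toQ v2) ≠ 0)
    (hC : coneQ (toQ '' S) = coneQ {toQ v1, toQ v2}) (hA : 0 < a ^ 2 + b ^ 2 - r ^ 2) :
    (interiorOf (coneN S) v1 v2 \ S).Finite := by
  have hphiS : ∀ s : PP, s ∈ S →
      0 ≤ BB a b s ∧ 0 ≤ (BB a b s) ^ 2 - (a ^ 2 + b ^ 2 - r ^ 2) * NN s := by
    intro s hsS
    by_cases hs0 : s = 0
    · subst hs0
      constructor <;> simp [BB, NN]
    · rw [hS, mem_circle_iff] at hsS
      obtain ⟨i, hi⟩ := hsS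
      have hN := NN_pos hs0
      have hi1 : 1 ≤ (i:ℝ) := by
        rcases Nat.eq_zero_or_pos i with rfl | hip
        · exfalso
          simp only [Nat.cast_zero] at hi
          linarith [hi, hN]
        · exact_mod_cast hip
      have hB : 0 ≤ BB a b s := by
        nlinarith [hi, hi1, hN, hA]
      refine ⟨hB, ?_⟩
      nlinarith [hi, hA, sq_nonneg ((a ^ 2 + b ^ 2 - r ^ 2) * (i:ℝ) - BB a b s)]
  have hphi : ∀ ξ ∈ coneQ (toQ '' S),
      ((0:ℚ) ≤ ξ 0 ∧ (0:ℚ) ≤ ξ 1) ∧ 0 ≤ BQ a b ξ ∧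
        0 ≤ (BQ a b ξ) ^ 2 - (a ^ 2 + b ^ 2 - r ^ 2) * NQ ξ := by
    intro ξ hξ
    refine coneQ_induction hξ
      (fun ξ => ((0:ℚ) ≤ ξ 0 ∧ (0:ℚ) ≤ ξ 1) ∧ 0 ≤ BQ a b ξ ∧
        0 ≤ (BQ a b ξ) ^ 2 - (a ^ 2 + b ^ 2 - r ^ 2) * NQ ξ)
      ⟨⟨le_refl 0, le_refl 0⟩, ?_, ?_⟩ ?_ ?_
    · simp [BQ]
    · simp [BQ, NQ]
    · rintro t ⟨s, hsS, rfl⟩ q hq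
      obtain ⟨hBs, hgs⟩ := hphiS s hsS
      have hq0 : (0:ℝ) ≤ (q:ℝ) := by exact_mod_cast hq
      have e1 : BQ a b (q • toQ s) = (q:ℝ) * BB a b s := by
        unfold BQ BB
        simp only [Pi.smul_apply, toQ_apply, smul_eq_mul]
        push_cast
        ring
      have e2 : NQ (q • toQ s) = (q:ℝ) ^ 2 * NN s := by
        unfold NQ NN
        simp only [Pi.smul_apply, toQ_apply, smul_eq_mul]
        push_cast
        ring
      refine ⟨⟨?_, ?_⟩, ?_, ?_⟩
      · show (0:ℚ) ≤ q * (s 0 : ℚ)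
        positivity
      · show (0:ℚ) ≤ q * (s 1 : ℚ)
        positivity
      · rw [e1]; exact mul_nonneg hq0 hBs
      · rw [e1, e2]
        linarith [mul_nonneg (sq_nonneg (q:ℝ)) hgs]
    · rintro y z ⟨⟨hy0, hy1⟩, hyB, hyg⟩ ⟨⟨hz0, hz1⟩, hzB, hzg⟩
      have hy0R : (0:ℝ) ≤ (y 0 : ℝ) := by exact_mod_cast hy0
      have hy1R : (0:ℝ) ≤ (y 1 : ℝ) := by exact_mod_cast hy1
      have hz0R : (0:ℝ) ≤ (z 0 : ℝ) := by exact_mod_cast hz0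
      have hz1R : (0:ℝ) ≤ (z 1 : ℝ) := by exact_mod_cast hz1
      have eB : BQ a b (y + z) = BQ a b y + BQ a b z := by
        unfold BQ
        simp only [Pi.add_apply]
        push_cast
        ring
      have eN : NQ (y + z) = NQ y + 2 * ((y 0:ℝ) * (z 0:ℝ) + (y 1:ℝ) * (z 1:ℝ)) + NQ z := by
        unfold NQ
        simp only [Pi.add_apply]
        push_cast
        ring
      have hdot : 0 ≤ (y 0:ℝ) * (z 0:ℝ) + (y 1:ℝ) * (z 1:ℝ) := by positivity
      have hcs : ((y 0:ℝ) * (z 0:ℝ) + (y 1:ℝ) * (z 1:ℝ)) ^ 2 ≤ NQ y * NQ z := by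
        unfold NQ
        linarith [sq_nonneg ((y 0:ℝ) * (z 1:ℝ) - (y 1:ℝ) * (z 0:ℝ))]
      have hbr := br_key hA hyB hzB hyg hzg (NQ_nonneg y) (NQ_nonneg z) hdot hcs
      refine ⟨⟨?_, ?_⟩, ?_, ?_⟩
      · show (0:ℚ) ≤ y 0 + z 0
        linarith
      · show (0:ℚ) ≤ y 1 + z 1
        linarith
      · rw [eB]; linarith
      · rw [eB, eN]
        linarith [hbr, hyg, hzg]
  have hv1cone : toQ v1 ∈ coneQ (toQ '' S) := by
    rw [hC]
    have h' := mem_coneQ_pair (u := toQ v1) (w := toQ v2) zero_le_one le_rfl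
    simpa using h'
  have hv2cone : toQ v2 ∈ coneQ (toQ '' S) := by
    rw [hC]
    have h' := mem_coneQ_pair (u := toQ v1) (w := toQ v2) le_rfl zero_le_one
    simpa using h'
  obtain ⟨-, hB1, hg1⟩ := hphi _ hv1cone
  obtain ⟨-, hB2, hg2⟩ := hphi _ hv2cone
  rw [BQ_toQ] at hB1 hB2
  rw [BQ_toQ, NQ_toQ] at hg1 hg2
  have hdot12 : 0 ≤ (v1 0:ℝ) * (v2 0:ℝ) + (v1 1:ℝ) * (v2 1:ℝ) := by positivity
  have hcs12 : ((v1 0:ℝ) * (v2 0:ℝ) + (v1 1:ℝ) * (v2 1:ℝ)) ^ 2 ≤ NN v1 * NN v2 := by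
    unfold NN
    linarith [sq_nonneg ((v1 0:ℝ) * (v2 1:ℝ) - (v1 1:ℝ) * (v2 0:ℝ))]
  have hb12nn : 0 ≤ BB a b v1 * BB a b v2
      - (a ^ 2 + b ^ 2 - r ^ 2) * ((v1 0:ℝ) * (v2 0:ℝ) + (v1 1:ℝ) * (v2 1:ℝ)) := by
    have h' := br_key hA hB1 hB2 hg1 hg2 (NN_nonneg v1) (NN_nonneg v2) hdot12 hcs12
    linarith
  have hdRcast : ((dQ (toQ v1) (toQ v2) : ℚ) : ℝ)
      = (v1 0:ℝ) * (v2 1:ℝ) - (v1 1:ℝ) * (v2 0:ℝ) := by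
    simp only [dQ, toQ_apply]
    push_cast
    ring
  have hdRne : (v1 0:ℝ) * (v2 1:ℝ) - (v1 1:ℝ) * (v2 0:ℝ) ≠ 0 := by
    rw [← hdRcast]
    exact_mod_cast hd
  have hident : (BB a b v1 * BB a b v2
        - (a ^ 2 + b ^ 2 - r ^ 2) * ((v1 0:ℝ) * (v2 0:ℝ) + (v1 1:ℝ) * (v2 1:ℝ))) ^ 2
      - ((BB a b v1) ^ 2 - (a ^ 2 + b ^ 2 - r ^ 2) * NN v1)
        * ((BB a b v2) ^ 2 - (a ^ 2 + b ^ 2 - r ^ 2) * NN v2)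
      = (a ^ 2 + b ^ 2 - r ^ 2) * r ^ 2
        * ((v1 0:ℝ) * (v2 1:ℝ) - (v1 1:ℝ) * (v2 0:ℝ)) ^ 2 := by
    unfold BB NN
    ring
  have hb12pos : 0 < BB a b v1 * BB a b v2
      - (a ^ 2 + b ^ 2 - r ^ 2) * ((v1 0:ℝ) * (v2 0:ℝ) + (v1 1:ℝ) * (v2 1:ℝ)) := by
    rcases hb12nn.lt_or_eq with h' | h'
    · exact h'
    · exfalso
      have hd2 : 0 < ((v1 0:ℝ) * (v2 1:ℝ) - (v1 1:ℝ) * (v2 0:ℝ)) ^ 2 :=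
        lt_of_le_of_ne (sq_nonneg _) (Ne.symm (pow_ne_zero 2 hdRne))
      have hgg := mul_nonneg hg1 hg2
      have hpos := mul_pos (mul_pos hA (by positivity : (0:ℝ) < r ^ 2)) hd2
      rw [← h'] at hident
      simp only [ne_eq, OfNat.ofNat_ne_zero, not_false_eq_true, zero_pow] at hident
      linarith [hident, hgg, hpos]
  set b12 : ℝ := BB a b v1 * BB a b v2
      - (a ^ 2 + b ^ 2 - r ^ 2) * ((v1 0:ℝ) * (v2 0:ℝ) + (v1 1:ℝ) * (v2 1:ℝ)) with hb12def
  set dabs : ℝ := |(v1 0:ℝ) * (v2 1:ℝ) - (v1 1:ℝ) * (v2 0:ℝ)| with hdabsdef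
  have hdabspos : 0 < dabs := abs_pos.mpr hdRne
  set Mv : ℝ := (a ^ 2 + b ^ 2 - r ^ 2) ^ 2 * dabs / (4 * b12) with hMdef
  set K : ℝ := (v1 0:ℝ) + (v1 1:ℝ) + (v2 0:ℝ) + (v2 1:ℝ) + 1 with hKdef
  have hK : 0 < K := by
    rw [hKdef]
    have c0 : (0:ℝ) ≤ (v1 0:ℝ) := Nat.cast_nonneg _
    have c1 : (0:ℝ) ≤ (v1 1:ℝ) := Nat.cast_nonneg _
    have c2 : (0:ℝ) ≤ (v2 0:ℝ) := Nat.cast_nonneg _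
    have c3 : (0:ℝ) ≤ (v2 1:ℝ) := Nat.cast_nonneg _
    linarith
  set Nb : ℕ := Nat.ceil (Mv * K) with hNbdef
  refine Set.Finite.subset (Set.Finite.pi (fun _ : Fin 2 => Set.finite_Iic Nb)) ?_
  intro x hx
  obtain ⟨hxint, hxS⟩ := hx
  obtain ⟨hca, hcb⟩ := (mem_int_iff hd hC).mp hxint
  have hrepr := reprP hd x
  have hx0 : (x 0 : ℝ) = (cA v1 v2 x : ℝ) * (v1 0:ℝ) + (cB v1 v2 x : ℝ) * (v2 0:ℝ) := by
    have h' := congrFun hrepr 0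
    simp only [toQ_apply, Pi.add_apply, Pi.smul_apply, smul_eq_mul] at h'
    exact_mod_cast h'
  have hx1 : (x 1 : ℝ) = (cA v1 v2 x : ℝ) * (v1 1:ℝ) + (cB v1 v2 x : ℝ) * (v2 1:ℝ) := by
    have h' := congrFun hrepr 1
    simp only [toQ_apply, Pi.add_apply, Pi.smul_apply, smul_eq_mul] at h'
    exact_mod_cast h'
  have hcaR : (0:ℝ) < (cA v1 v2 x : ℝ) := by exact_mod_cast hca
  have hcbR : (0:ℝ) < (cB v1 v2 x : ℝ) := by exact_mod_cast hcb
  have hxcone : toQ x ∈ coneQ (toQ '' S) := hxint.1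
  obtain ⟨-, hBx, -⟩ := hphi _ hxcone
  rw [BQ_toQ] at hBx
  have hgx : (BB a b x) ^ 2 - (a ^ 2 + b ^ 2 - r ^ 2) * NN x
      = (cA v1 v2 x:ℝ) ^ 2 * ((BB a b v1) ^ 2 - (a ^ 2 + b ^ 2 - r ^ 2) * NN v1)
        + 2 * (cA v1 v2 x:ℝ) * (cB v1 v2 x:ℝ) * b12
        + (cB v1 v2 x:ℝ) ^ 2 * ((BB a b v2) ^ 2 - (a ^ 2 + b ^ 2 - r ^ 2) * NN v2) := by
    rw [hb12def]
    unfold BB NN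
    rw [hx0, hx1]
    ring
  have hglt : (BB a b x) ^ 2 - (a ^ 2 + b ^ 2 - r ^ 2) * NN x
      < (a ^ 2 + b ^ 2 - r ^ 2) ^ 2 / 4 := by
    by_contra hge
    push_neg at hge
    exact hxS (by rw [hS]; exact in_S_of_g_big hA hBx hge)
  have hprod : 2 * (cA v1 v2 x:ℝ) * (cB v1 v2 x:ℝ) * b12
      ≤ (BB a b x) ^ 2 - (a ^ 2 + b ^ 2 - r ^ 2) * NN x := by
    rw [hgx]
    linarith [mul_nonneg (sq_nonneg (cA v1 v2 x:ℝ)) hg1,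
      mul_nonneg (sq_nonneg (cB v1 v2 x:ℝ)) hg2]
  have habs : (0:ℚ) < |dQ (toQ v1) (toQ v2)| := abs_pos.mpr hd
  have hα1 : 1 / |dQ (toQ v1) (toQ v2)| ≤ cA v1 v2 x := by
    obtain ⟨z, hz⟩ : ∃ z : ℤ, (z:ℚ) = dQ (toQ x) (toQ v2) :=
      ⟨(x 0:ℤ) * (v2 1:ℤ) - (x 1:ℤ) * (v2 0:ℤ), by
        simp only [dQ, toQ_apply]; push_cast; ring⟩
    have heq : cA v1 v2 x = (z:ℚ) / dQ (toQ v1) (toQ v2) := by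
      unfold cA; rw [hz]
    have hzne : z ≠ 0 := by
      intro h0
      rw [h0] at heq
      simp only [Int.cast_zero, zero_div] at heq
      exact absurd heq hca.ne'
    have hz1 : (1:ℚ) ≤ |(z:ℚ)| := by exact_mod_cast Int.one_le_abs hzne
    have hpos : 0 < (z:ℚ) / dQ (toQ v1) (toQ v2) := heq ▸ hca
    calc 1 / |dQ (toQ v1) (toQ v2)| ≤ |(z:ℚ)| / |dQ (toQ v1) (toQ v2)| :=
          (div_le_div_iff_of_pos_right habs).mpr hz1
      _ = |(z:ℚ) / dQ (toQ v1) (toQ v2)| := (abs_div _ _).symm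
      _ = (z:ℚ) / dQ (toQ v1) (toQ v2) := abs_of_pos hpos
      _ = cA v1 v2 x := heq.symm
  have hβ1 : 1 / |dQ (toQ v1) (toQ v2)| ≤ cB v1 v2 x := by
    obtain ⟨z, hz⟩ : ∃ z : ℤ, (z:ℚ) = dQ (toQ v1) (toQ x) :=
      ⟨(v1 0:ℤ) * (x 1:ℤ) - (v1 1:ℤ) * (x 0:ℤ), by
        simp only [dQ, toQ_apply]; push_cast; ring⟩
    have heq : cB v1 v2 x = (z:ℚ) / dQ (toQ v1) (toQ v2) := by
      unfold cB; rw [hz]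
    have hzne : z ≠ 0 := by
      intro h0
      rw [h0] at heq
      simp only [Int.cast_zero, zero_div] at heq
      exact absurd heq hcb.ne'
    have hz1 : (1:ℚ) ≤ |(z:ℚ)| := by exact_mod_cast Int.one_le_abs hzne
    have hpos : 0 < (z:ℚ) / dQ (toQ v1) (toQ v2) := heq ▸ hcb
    calc 1 / |dQ (toQ v1) (toQ v2)| ≤ |(z:ℚ)| / |dQ (toQ v1) (toQ v2)| :=
          (div_le_div_iff_of_pos_right habs).mpr hz1
      _ = |(z:ℚ) / dQ (toQ v1) (toQ v2)| := (abs_div _ _).symm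
      _ = (z:ℚ) / dQ (toQ v1) (toQ v2) := abs_of_pos hpos
      _ = cB v1 v2 x := heq.symm
  have hαR : 1 / dabs ≤ (cA v1 v2 x : ℝ) := by
    have h' : ((1 / |dQ (toQ v1) (toQ v2)| : ℚ) : ℝ) ≤ ((cA v1 v2 x : ℚ) : ℝ) :=
      Rat.cast_le.mpr hα1
    rw [Rat.cast_div, Rat.cast_one, Rat.cast_abs, hdRcast] at h'
    rw [hdabsdef]
    exact h'
  have hβR : 1 / dabs ≤ (cB v1 v2 x : ℝ) := by
    have h' : ((1 / |dQ (toQ v1) (toQ v2)| : ℚ) : ℝ) ≤ ((cB v1 v2 x : ℚ) : ℝ) :=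
      Rat.cast_le.mpr hβ1
    rw [Rat.cast_div, Rat.cast_one, Rat.cast_abs, hdRcast] at h'
    rw [hdabsdef]
    exact h'
  have h2ab : ((cA v1 v2 x:ℝ) + (cB v1 v2 x:ℝ)) * (1 / dabs)
      ≤ 2 * (cA v1 v2 x:ℝ) * (cB v1 v2 x:ℝ) := by
    have p1 : (1 / dabs) * (cB v1 v2 x:ℝ) ≤ (cA v1 v2 x:ℝ) * (cB v1 v2 x:ℝ) :=
      mul_le_mul_of_nonneg_right hαR hcbR.le
    have p2 : (cA v1 v2 x:ℝ) * (1 / dabs) ≤ (cA v1 v2 x:ℝ) * (cB v1 v2 x:ℝ) :=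
      mul_le_mul_of_nonneg_left hβR hcaR.le
    linarith [p1, p2]
  have hsumlt : (cA v1 v2 x:ℝ) + (cB v1 v2 x:ℝ) < Mv := by
    rw [hMdef]
    rw [lt_div_iff₀ (by linarith [hb12pos] : (0:ℝ) < 4 * b12)]
    have step : (((cA v1 v2 x:ℝ) + (cB v1 v2 x:ℝ)) * (1 / dabs)) * b12
        < (a ^ 2 + b ^ 2 - r ^ 2) ^ 2 / 4 := by
      calc (((cA v1 v2 x:ℝ) + (cB v1 v2 x:ℝ)) * (1 / dabs)) * b12
          ≤ (2 * (cA v1 v2 x:ℝ) * (cB v1 v2 x:ℝ)) * b12 :=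
            mul_le_mul_of_nonneg_right h2ab hb12pos.le
        _ ≤ (BB a b x) ^ 2 - (a ^ 2 + b ^ 2 - r ^ 2) * NN x := hprod
        _ < (a ^ 2 + b ^ 2 - r ^ 2) ^ 2 / 4 := hglt
    have hmul := mul_lt_mul_of_pos_right step (by positivity : (0:ℝ) < 4 * dabs)
    have e1 : (((cA v1 v2 x:ℝ) + (cB v1 v2 x:ℝ)) * (1 / dabs)) * b12 * (4 * dabs)
        = ((cA v1 v2 x:ℝ) + (cB v1 v2 x:ℝ)) * (4 * b12) := by
      field_simp
    have e2 : (a ^ 2 + b ^ 2 - r ^ 2) ^ 2 / 4 * (4 * dabs)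
        = (a ^ 2 + b ^ 2 - r ^ 2) ^ 2 * dabs := by ring
    rw [e1, e2] at hmul
    exact hmul
  have c0 : (0:ℝ) ≤ (v1 0:ℝ) := Nat.cast_nonneg _
  have c1 : (0:ℝ) ≤ (v1 1:ℝ) := Nat.cast_nonneg _
  have c2 : (0:ℝ) ≤ (v2 0:ℝ) := Nat.cast_nonneg _
  have c3 : (0:ℝ) ≤ (v2 1:ℝ) := Nat.cast_nonneg _
  have hvK0 : (v1 0:ℝ) ≤ K := by rw [hKdef]; linarith
  have hvK1 : (v1 1:ℝ) ≤ K := by rw [hKdef]; linarith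
  have hvK2 : (v2 0:ℝ) ≤ K := by rw [hKdef]; linarith
  have hvK3 : (v2 1:ℝ) ≤ K := by rw [hKdef]; linarith
  have t3 : ((cA v1 v2 x:ℝ) + (cB v1 v2 x:ℝ)) * K < Mv * K :=
    mul_lt_mul_of_pos_right hsumlt hK
  have hb0 : (x 0:ℝ) < Mv * K := by
    rw [hx0]
    have t1 : (cA v1 v2 x:ℝ) * (v1 0:ℝ) ≤ (cA v1 v2 x:ℝ) * K :=
      mul_le_mul_of_nonneg_left hvK0 hcaR.le
    have t2 : (cB v1 v2 x:ℝ) * (v2 0:ℝ) ≤ (cB v1 v2 x:ℝ) * K :=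
      mul_le_mul_of_nonneg_left hvK2 hcbR.le
    linarith [t1, t2, t3]
  have hb1 : (x 1:ℝ) < Mv * K := by
    rw [hx1]
    have t1 : (cA v1 v2 x:ℝ) * (v1 1:ℝ) ≤ (cA v1 v2 x:ℝ) * K :=
      mul_le_mul_of_nonneg_left hvK1 hcaR.le
    have t2 : (cB v1 v2 x:ℝ) * (v2 1:ℝ) ≤ (cB v1 v2 x:ℝ) * K :=
      mul_le_mul_of_nonneg_left hvK3 hcbR.le
    linarith [t1, t2, t3]
  have hMK : Mv * K ≤ (Nb:ℝ) := by rw [hNbdef]; exact Nat.le_ceil _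
  rw [Set.mem_univ_pi]
  intro i
  rw [Set.mem_Iic]
  fin_cases i
  · have hle : (x 0:ℝ) ≤ (Nb:ℝ) := by linarith
    exact_mod_cast hle
  · have hle : (x 1:ℝ) ≤ (Nb:ℝ) := by linarith
    exact_mod_cast hle

lemma lemmaF {S : Set PP} {v1 v2 : PP} (a b r : ℝ) (hr : 0 < r)
    (hS : S = circleSG a b r) (h1 : v1 ≠ 0) (h2 : v2 ≠ 0)
    (hd : dQ (toQ v1) (toQ v2) ≠ 0)
    (hC : coneQ (toQ '' S) = coneQ {toQ v1, toQ v2}) :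
    (interiorOf (coneN S) v1 v2 \ S).Finite := by
    rcases lt_trichotomy (a ^ 2 + b ^ 2 - r ^ 2) 0 with hA | hA | hA
    · exact lemmaF_neg a b r hr hS h1 h2 hd hC hA
    · exact lemmaF_zero a b r hr hS h1 h2 hd hC hA
    · exact lemmaF_pos a b r hr hS h1 h2 hd hC hA
lemma interiorOf_comm (X : Set PP) (v1 v2 : PP) :
    interiorOf X v1 v2 = interiorOf X v2 v1 := by
  unfold interiorOf
  rw [Set.union_comm]

lemma dQ_anti (x y : QQ) : dQ x y = -dQ y x := by
  simp only [dQ]; ring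

set_option maxHeartbeats 1000000 in
lemma gen_ray1 {S : Set PP} {G : Finset PP} {v1 v2 n1 n2 : PP}
    (hG : minimalGenSet S G) (hv1 : v1 ≠ 0)
    (hd : dQ (toQ v1) (toQ v2) ≠ 0)
    (hC : coneQ (toQ '' S) = coneQ {toQ v1, toQ v2})
    (hintsub : interiorOf (coneN S) v1 v2 ⊆ sbar S G)
    (hn1sb : n1 ∈ sbar S G) (hn1ray : n1 ∈ rayN v1) (hn1ne : n1 ≠ 0)
    (hn1min : ∀ m ∈ sbar S G ∩ rayN v1, m ≠ 0 → normSq n1 ≤ normSq m)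
    (hn2sb : n2 ∈ sbar S G) (hn2ray : n2 ∈ rayN v2) (hn2ne : n2 ≠ 0)
    (hcrit : ∀ a ∈ coneN S \ sbar S G, a + n1 ∉ sbar S G ∨ a + n2 ∉ sbar S G) :
    sbar S G ∩ rayN v1 = {x | ∃ k : ℕ, x = k • n1} := by
  ext z
  simp only [Set.mem_inter_iff, Set.mem_setOf_eq]
  constructor
  · rintro ⟨hzsb, hzray⟩
    suffices H : ∀ N x, normSq x = N → x ∈ sbar S G → x ∈ rayN v1 →
        ∃ k : ℕ, x = k • n1 by
      exact H (normSq z) z rfl hzsb hzray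
    intro N
    induction N using Nat.strong_induction_on with
    | _ N ih =>
      intro x hN hxsb hxray
      obtain ⟨q, hq0, hqe⟩ := hxray
      obtain ⟨p, hp0, hpe⟩ := hn1ray
      have hvnorm : (0:ℚ) < (normSq v1 : ℚ) := by exact_mod_cast normSq_pos hv1
      have hp : 0 < p := by
        rcases hp0.lt_or_eq with h | h
        · exact h
        · exfalso
          apply hn1ne
          apply toQ_eq_zero
          rw [hpe, ← h, zero_smul]
      by_cases hq : q = 0
      · refine ⟨0, ?_⟩
        have hx0 : toQ x = 0 := by rw [hqe, hq, zero_smul]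
        rw [toQ_eq_zero hx0]
        simp
      have hqpos : 0 < q := lt_of_le_of_ne hq0 (Ne.symm hq)
      have hxne : x ≠ 0 := by
        intro h
        apply hv1
        apply toQ_eq_zero
        have h0 : q • toQ v1 = 0 := by rw [← hqe, h, toQ_zero]
        rcases smul_eq_zero.mp h0 with h' | h'
        · exact absurd h' hq
        · exact h'
      have hnormx : (normSq x : ℚ) = q ^ 2 * (normSq v1 : ℚ) := normSq_cast_ray hqe
      have hnormn : (normSq n1 : ℚ) = p ^ 2 * (normSq v1 : ℚ) := normSq_cast_ray hpe
      have hmin := hn1min x ⟨hxsb, ⟨q, hq0, hqe⟩⟩ hxne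
      have hminQ : (normSq n1 : ℚ) ≤ (normSq x : ℚ) := by exact_mod_cast hmin
      have hsqle : p ^ 2 * (normSq v1 : ℚ) ≤ q ^ 2 * (normSq v1 : ℚ) := by
        rw [← hnormn, ← hnormx]; exact hminQ
      have hsq' : p ^ 2 ≤ q ^ 2 := le_of_mul_le_mul_right hsqle hvnorm
      have hpq : p ≤ q := by nlinarith [hsq', hp, hqpos]
      have hle : ∀ i, n1 i ≤ x i := by
        intro i
        have h1 : (n1 i : ℚ) = p * (v1 i : ℚ) := by
          have h' := congrFun hpe i
          simpa using h'
        have h2 : (x i : ℚ) = q * (v1 i : ℚ) := by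
          have h' := congrFun hqe i
          simpa using h'
        have h3 : (n1 i : ℚ) ≤ (x i : ℚ) := by
          rw [h1, h2]
          exact mul_le_mul_of_nonneg_right hpq (Nat.cast_nonneg _)
        exact_mod_cast h3
      have hxy : x = (fun i => x i - n1 i) + n1 := by
        funext i
        have := hle i
        simp only [Pi.add_apply]
        omega
      have hyQ : toQ (fun i => x i - n1 i) = (q - p) • toQ v1 := by
        have hsum : toQ x = toQ (fun i => x i - n1 i) + toQ n1 := by
          rw [← toQ_add, ← hxy]
        have hsub : toQ (fun i => x i - n1 i) = toQ x - toQ n1 := by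
          rw [eq_sub_iff_add_eq]; exact hsum.symm
        rw [hsub, hqe, hpe, ← sub_smul]
      have hyray : (fun i => x i - n1 i) ∈ rayN v1 := ⟨q - p, by linarith, hyQ⟩
      by_cases hysb : (fun i => x i - n1 i) ∈ sbar S G
      · have hny : (normSq (fun i => x i - n1 i) : ℚ)
            = (q - p) ^ 2 * (normSq v1 : ℚ) := normSq_cast_ray hyQ
        have hsq2 : (q - p) ^ 2 < q ^ 2 := by nlinarith [hp, hpq, hqpos]
        have hltQ : (normSq (fun i => x i - n1 i) : ℚ) < (normSq x : ℚ) := by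
          rw [hny, hnormx]
          exact mul_lt_mul_of_pos_right hsq2 hvnorm
        have hlt : normSq (fun i => x i - n1 i) < normSq x := by exact_mod_cast hltQ
        obtain ⟨k, hk⟩ := ih (normSq (fun i => x i - n1 i))
          (by rw [← hN]; exact hlt) _ rfl hysb hyray
        refine ⟨k + 1, ?_⟩
        rw [hxy, hk, succ_nsmul]
      · exfalso
        have hcoY := coordP hd
          (show toQ (fun i => x i - n1 i) = (q - p) • toQ v1 + (0:ℚ) • toQ v2 by
            rw [hyQ]; simp)
        have hyC : (fun i => x i - n1 i) ∈ coneN S := by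
          rw [mem_coneN_iff hd hC, hcoY.1, hcoY.2]
          constructor
          · linarith
          · exact le_refl 0
        rcases hcrit _ ⟨hyC, hysb⟩ with h | h
        · apply h
          rw [← hxy]
          exact hxsb
        · apply h
          apply hintsub
          rw [mem_int_iff hd hC]
          have hyne : (fun i => x i - n1 i) ≠ 0 := by
            intro h0
            exact hysb (h0 ▸ zero_mem_sbar hG)
          have hqp : 0 < q - p := by
            rcases (sub_nonneg.mpr hpq).lt_or_eq with h' | h'
            · exact h'
            · exfalso
              apply hyne
              apply toQ_eq_zero
              rw [hyQ, ← h', zero_smul]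
          obtain ⟨p2, hp20, hp2e⟩ := hn2ray
          have hp2pos : 0 < p2 := by
            rcases hp20.lt_or_eq with h' | h'
            · exact h'
            · exfalso
              apply hn2ne
              apply toQ_eq_zero
              rw [hp2e, ← h', zero_smul]
          have hcoN2 := coordP hd
            (show toQ n2 = (0:ℚ) • toQ v1 + p2 • toQ v2 by rw [hp2e]; simp)
          rw [cA_add, cB_add, hcoY.1, hcoY.2, hcoN2.1, hcoN2.2]
          constructor <;> linarith
  · rintro ⟨k, rfl⟩
    exact ⟨sbar_nsmul hG hn1sb k, rayN_nsmul hn1ray k⟩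
end Stmt6

open Stmt6 in
set_option maxHeartbeats 1000000 in
/-- A simplicial affine circle semigroup `𝔖` is Buchsbaum iff
`int(𝒞) = int(𝔖̄)` and `𝔖̄ ∩ τ_j` is generated by a single element for `j = 1, 2`. -/
theorem stmt6 (a b r : ℝ) (hr : 0 < r) (S : Set (Fin 2 → ℕ)) (hS : S = circleSG a b r)
    (G : Finset (Fin 2 → ℕ)) (hG : minimalGenSet S G)
    (v1 v2 : Fin 2 → ℕ) (hsimp : Simplicial S v1 v2) :
    IsBuchsbaumSG S G (coneN S) (rayN v1) (rayN v2) ↔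
      (interiorOf (coneN S) v1 v2 = interiorOf (sbar S G) v1 v2 ∧
        genByOne (sbar S G ∩ rayN v1) ∧ genByOne (sbar S G ∩ rayN v2)) := by
  classical
  obtain ⟨hv1, hv2, hraysne, hC⟩ := hsimp
  have hd : dQ (toQ v1) (toQ v2) ≠ 0 := d_ne_zero hv1 hv2 hraysne
  have hd' : dQ (toQ v2) (toQ v1) ≠ 0 := by
    intro h
    apply hd
    rw [dQ_anti, h, neg_zero]
  have hC' : coneQ (toQ '' S) = coneQ {toQ v2, toQ v1} := by
    rw [hC, Set.pair_comm]
  obtain ⟨s1, hs1S, hs1ray, hs1ne⟩ := exists_ray_elt1 hv1 hd hC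
  obtain ⟨s2, hs2S, hs2ray, hs2ne⟩ := exists_ray_elt2 hv2 hd hC
  have hsbarC : sbar S G ⊆ coneN S := sbar_sub_coneN hG hv1 hv2 hd hC
  have hFin : (interiorOf (coneN S) v1 v2 \ S).Finite :=
    lemmaF a b r hr hS hv1 hv2 hd hC
  constructor
  · rintro ⟨n1, n2, hmin1, hmin2, hcrit⟩
    obtain ⟨hn1mem, hn1ne, hn1min⟩ := hmin1
    obtain ⟨hn2mem, hn2ne, hn2min⟩ := hmin2
    have hn1sb : n1 ∈ sbar S G := hn1mem.1
    have hn1ray : n1 ∈ rayN v1 := hn1mem.2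
    have hn2sb : n2 ∈ sbar S G := hn2mem.1
    have hn2ray : n2 ∈ rayN v2 := hn2mem.2
    have hintadd : ∀ x ∈ interiorOf (coneN S) v1 v2, ∀ n ∈ sbar S G,
        x + n ∈ interiorOf (coneN S) v1 v2 := by
      intro x hx n hn
      rw [mem_int_iff hd hC] at hx ⊢
      have hnC := (mem_coneN_iff hd hC).mp (hsbarC hn)
      rw [cA_add, cB_add]
      constructor
      · linarith [hx.1, hnC.1]
      · linarith [hx.2, hnC.2]
    have hintsub : interiorOf (coneN S) v1 v2 ⊆ sbar S G := by
      by_contra hcon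
      rw [Set.not_subset] at hcon
      obtain ⟨x0, hx0int, hx0sb⟩ := hcon
      have hstep : ∀ x, x ∈ interiorOf (coneN S) v1 v2 → x ∉ sbar S G →
          ∃ y, (y ∈ interiorOf (coneN S) v1 v2 ∧ y ∉ sbar S G) ∧
            normSq x < normSq y := by
        intro x hxint hxsb
        rcases hcrit x ⟨hxint.1, hxsb⟩ with h | h
        · exact ⟨x + n1, ⟨hintadd x hxint n1 hn1sb, h⟩, normSq_add_lt hn1ne⟩
        · exact ⟨x + n2, ⟨hintadd x hxint n2 hn2sb, h⟩, normSq_add_lt hn2ne⟩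
      have hEfin : (interiorOf (coneN S) v1 v2 \ sbar S G).Finite := by
        apply hFin.subset
        intro y hy
        exact ⟨hy.1, fun hyS => hy.2 (S_sub_sbar hG hyS)⟩
      obtain ⟨m, hm, hmax⟩ := Set.Finite.exists_maximalFor normSq _ hEfin
        ⟨x0, hx0int, hx0sb⟩
      obtain ⟨y, hy, hlt⟩ := hstep m hm.1 hm.2
      have heq := hmax hy hlt.le
      omega
    have hinteq : interiorOf (coneN S) v1 v2 = interiorOf (sbar S G) v1 v2 := by
      ext z
      constructor
      · intro hz
        exact ⟨hintsub hz, hz.2⟩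
      · intro hz
        exact ⟨hsbarC hz.1, hz.2⟩
    have hintsub' : interiorOf (coneN S) v2 v1 ⊆ sbar S G := by
      rw [interiorOf_comm]
      exact hintsub
    have hcrit' : ∀ a ∈ coneN S \ sbar S G,
        a + n2 ∉ sbar S G ∨ a + n1 ∉ sbar S G := by
      intro a ha
      exact (hcrit a ha).symm
    have hn2min' : ∀ m ∈ sbar S G ∩ rayN v2, m ≠ 0 → normSq n2 ≤ normSq m := hn2min
    refine ⟨hinteq, ⟨n1, ?_⟩, ⟨n2, ?_⟩⟩
    · exact gen_ray1 hG hv1 hd hC hintsub hn1sb hn1ray hn1ne hn1min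
        hn2sb hn2ray hn2ne hcrit
    · exact gen_ray1 hG hv2 hd' hC' hintsub' hn2sb hn2ray hn2ne hn2min'
        hn1sb hn1ray hn1ne hcrit'
  · rintro ⟨hinteq, ⟨m1, hm1⟩, ⟨m2, hm2⟩⟩
    have hm1mem : m1 ∈ sbar S G ∩ rayN v1 := by
      rw [hm1]
      exact ⟨1, (one_smul ℕ m1).symm⟩
    have hm2mem : m2 ∈ sbar S G ∩ rayN v2 := by
      rw [hm2]
      exact ⟨1, (one_smul ℕ m2).symm⟩
    have hm1ne : m1 ≠ 0 := by
      intro h0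
      have hs1mem : s1 ∈ sbar S G ∩ rayN v1 := ⟨S_sub_sbar hG hs1S, hs1ray⟩
      rw [hm1] at hs1mem
      obtain ⟨k, hk⟩ := hs1mem
      apply hs1ne
      rw [hk, h0, smul_zero]
    have hm2ne : m2 ≠ 0 := by
      intro h0
      have hs2mem : s2 ∈ sbar S G ∩ rayN v2 := ⟨S_sub_sbar hG hs2S, hs2ray⟩
      rw [hm2] at hs2mem
      obtain ⟨k, hk⟩ := hs2mem
      apply hs2ne
      rw [hk, h0, smul_zero]
    refine ⟨m1, m2, ⟨hm1mem, hm1ne, ?_⟩, ⟨hm2mem, hm2ne, ?_⟩, ?_⟩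
    · intro m hmmem hmne
      rw [hm1] at hmmem
      obtain ⟨k, rfl⟩ := hmmem
      have hk1 : k ≠ 0 := by
        rintro rfl
        exact hmne (zero_smul ℕ m1)
      rw [normSq_nsmul]
      have h1 : 1 ≤ k ^ 2 := Nat.one_le_iff_ne_zero.mpr (pow_ne_zero 2 hk1)
      calc normSq m1 = 1 * normSq m1 := (one_mul _).symm
        _ ≤ k ^ 2 * normSq m1 := Nat.mul_le_mul_right _ h1
    · intro m hmmem hmne
      rw [hm2] at hmmem
      obtain ⟨k, rfl⟩ := hmmem
      have hk1 : k ≠ 0 := by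
        rintro rfl
        exact hmne (zero_smul ℕ m2)
      rw [normSq_nsmul]
      have h1 : 1 ≤ k ^ 2 := Nat.one_le_iff_ne_zero.mpr (pow_ne_zero 2 hk1)
      calc normSq m2 = 1 * normSq m2 := (one_mul _).symm
        _ ≤ k ^ 2 * normSq m2 := Nat.mul_le_mul_right _ h1
    · rintro x ⟨hxC, hxsb⟩
      have hxnotint : x ∉ interiorOf (coneN S) v1 v2 := by
        intro hxint
        rw [hinteq] at hxint
        exact hxsb hxint.1
      have hxray : x ∈ rayN v1 ∪ rayN v2 := by
        by_contra hnr
        exact hxnotint ⟨hxC, hnr⟩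
      rcases hxray with hxr | hxr
      · left
        intro hmem
        have hsum : x + m1 ∈ sbar S G ∩ rayN v1 := ⟨hmem, rayN_add hxr hm1mem.2⟩
        rw [hm1] at hsum
        obtain ⟨k, hk⟩ := hsum
        rcases k with _ | j
        · apply hm1ne
          funext i
          have h' := congrFun hk i
          simp only [Pi.add_apply, zero_smul, Pi.zero_apply] at h'
          show m1 i = 0
          omega
        · apply hxsb
          have hxj : x = j • m1 := by
            funext i
            have h' := congrFun hk i
            simp only [Pi.add_apply, Pi.smul_apply, smul_eq_mul] at h'
            rw [Nat.succ_mul] at h'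
            exact Nat.add_right_cancel h'
          rw [hxj]
          exact sbar_nsmul hG hm1mem.1 j
      · right
        intro hmem
        have hsum : x + m2 ∈ sbar S G ∩ rayN v2 := ⟨hmem, rayN_add hxr hm2mem.2⟩
        rw [hm2] at hsum
        obtain ⟨k, hk⟩ := hsum
        rcases k with _ | j
        · apply hm2ne
          funext i
          have h' := congrFun hk i
          simp only [Pi.add_apply, zero_smul, Pi.zero_apply] at h'
          show m2 i = 0
          omega
        · apply hxsb
          have hxj : x = j • m2 := by
            funext i
            have h' := congrFun hk i
            simp only [Pi.add_apply, Pi.smul_apply, smul_eq_mul] at h'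
            rw [Nat.succ_mul] at h'
            exact Nat.add_right_cancel h'
          rw [hxj]
          exact sbar_nsmul hG hm2mem.1 j
end

section
/- Let S ⊆ ℕ^2 be a simplicial affine semigroup with 𝒞 = L_{ℚ≥}(S) ∩ ℕ^2, minimal generators containing elements n_1 ∈ τ_1, n_2 ∈ τ_2 on the extremal rays, and S̄ = {a ∈ ℕ^2 : a + g ∈ S for all generators g}. If int(𝒞) = int(S̄) and S̄ ∩ τ_j is generated by one element n_j' for j = 1,2, then for every a ∈ 𝒞 \ S̄, at least one of a + n_1', a + n_2' does not belong to S̄. -/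
open Set
open scoped Pointwise

lemma rayN_add {v x y : Fin 2 → ℕ} (hx : x ∈ rayN v) (hy : y ∈ rayN v) :
    x + y ∈ rayN v := by
  obtain ⟨q, hq, hxq⟩ := hx
  obtain ⟨q', hq', hyq⟩ := hy
  exact ⟨q + q', by positivity, by rw [toQ_add, hxq, hyq, add_smul]⟩

lemma key_lemma (S : Set (Fin 2 → ℕ)) (G : Finset (Fin 2 → ℕ))
    (v n : Fin 2 → ℕ)
    (h : sbar S G ∩ rayN v = {x | ∃ k : ℕ, x = k • n})
    (a : Fin 2 → ℕ) (ha : a ∈ rayN v) (hna : a + n ∈ sbar S G) :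
    a ∈ sbar S G := by
  have hn : n ∈ sbar S G ∩ rayN v := by
    rw [h]; exact ⟨1, (one_smul ℕ n).symm⟩
  have hsum : a + n ∈ sbar S G ∩ rayN v := ⟨hna, rayN_add ha hn.2⟩
  rw [h] at hsum
  obtain ⟨k, hk⟩ := hsum
  have haeq : a = (k - 1) • n := by
    funext i
    have := congrFun hk i
    simp only [Pi.add_apply, Pi.smul_apply, smul_eq_mul] at this ⊢
    cases k with
    | zero => simp only [Nat.zero_mul] at this ⊢; omega
    | succ m =>
      rw [Nat.succ_mul] at this
      simp only [Nat.succ_sub_one]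
      exact Nat.add_right_cancel this
  have : a ∈ sbar S G ∩ rayN v := by rw [h]; exact ⟨k - 1, haeq⟩
  exact this.1

/-- If `int(𝒞) = int(S̄)` and `S̄ ∩ τ_j` is generated by one
element `n_j'` for `j = 1, 2`, then for every `a ∈ 𝒞 \ S̄`, at least one of
`a + n_1'`, `a + n_2'` does not belong to `S̄`. -/
theorem stmt8 (S : Set (Fin 2 → ℕ)) (G : Finset (Fin 2 → ℕ))
    (hG : (AddSubmonoid.closure (G : Set (Fin 2 → ℕ)) : Set (Fin 2 → ℕ)) = S)
    (v1 v2 n1 n2 : Fin 2 → ℕ) (hsimp : Simplicial S v1 v2)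
    (hn1G : n1 ∈ G) (hn2G : n2 ∈ G)
    (hn1 : IsMinOnRay S (rayN v1) n1) (hn2 : IsMinOnRay S (rayN v2) n2)
    (hint : interiorOf (coneN S) v1 v2 = interiorOf (sbar S G) v1 v2)
    (n1' n2' : Fin 2 → ℕ)
    (h1 : sbar S G ∩ rayN v1 = {x | ∃ k : ℕ, x = k • n1'})
    (h2 : sbar S G ∩ rayN v2 = {x | ∃ k : ℕ, x = k • n2'}) :
    ∀ a ∈ coneN S \ sbar S G, a + n1' ∉ sbar S G ∨ a + n2' ∉ sbar S G := by
  intro a ⟨haC, haS⟩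
  by_contra hcon
  push_neg at hcon
  obtain ⟨ha1, ha2⟩ := hcon
  have hray : a ∈ rayN v1 ∪ rayN v2 := by
    by_contra hr
    have : a ∈ interiorOf (coneN S) v1 v2 := ⟨haC, hr⟩
    rw [hint] at this
    exact haS this.1
  cases hray with
  | inl h => exact haS (key_lemma S G v1 n1' h1 a h ha1)
  | inr h => exact haS (key_lemma S G v2 n2' h2 a h ha2)
end

section
/- Let S ⊆ ℕ^2 be a simplicial affine semigroup with extremal rays τ_1, τ_2 and let n_1' ∈ τ_1, n_2' ∈ τ_2 be nonzero elements of S. Suppose D ⊆ 𝒞 \ S is a non-empty finite set such that every a ∈ 𝒞 \ S lies in D. Then the element a_0 ∈ D maximizing the Euclidean norm satisfies a_0 + n_1' ∈ S and a_0 + n_2' ∈ S, hence S is not Cohen–Macaulay. -/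
open Set
open scoped Pointwise

lemma coneQ_add {G : Set (Fin 2 → ℚ)} {x y : Fin 2 → ℚ}
    (hx : x ∈ coneQ G) (hy : y ∈ coneQ G) : x + y ∈ coneQ G := by
  obtain ⟨n, q, f, hq, hf, hx⟩ := hx
  obtain ⟨m, p, g, hp, hg, hy⟩ := hy
  refine ⟨n + m, Fin.append q p, Fin.append f g, ?_, ?_, ?_⟩
  · intro i
    refine Fin.addCases (fun j => ?_) (fun j => ?_) i
    · rw [Fin.append_left]; exact hq j
    · rw [Fin.append_right]; exact hp j
  · intro i
    refine Fin.addCases (fun j => ?_) (fun j => ?_) i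
    · simpa using hf j
    · simpa using hg j
  · rw [Fin.sum_univ_add]
    simp only [Fin.append_left, Fin.append_right]
    rw [hx, hy]

/-- If `D = 𝒞 \ S` is non-empty and finite, then its element `a₀`
of maximal norm satisfies `a₀ + n_1' ∈ S` and `a₀ + n_2' ∈ S`, hence `S` is not
Cohen–Macaulay. -/
theorem stmt9 (S : Set (Fin 2 → ℕ)) (G : Finset (Fin 2 → ℕ))
    (hG : (AddSubmonoid.closure (G : Set (Fin 2 → ℕ)) : Set (Fin 2 → ℕ)) = S)
    (v1 v2 n1' n2' : Fin 2 → ℕ) (hsimp : Simplicial S v1 v2)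
    (hn1 : n1' ∈ S ∩ rayN v1) (hn10 : n1' ≠ 0)
    (hn2 : n2' ∈ S ∩ rayN v2) (hn20 : n2' ≠ 0)
    (D : Set (Fin 2 → ℕ)) (hD : D ⊆ coneN S \ S) (hDfin : D.Finite)
    (hDne : D.Nonempty) (hall : coneN S \ S ⊆ D)
    (a0 : Fin 2 → ℕ) (ha0 : a0 ∈ D) (hmax : ∀ a ∈ D, normSq a ≤ normSq a0) :
    a0 + n1' ∈ S ∧ a0 + n2' ∈ S ∧
      ¬ (∀ a ∈ coneN S \ S, a + n1' ∉ S ∨ a + n2' ∉ S) := by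
  have key : ∀ n' : Fin 2 → ℕ, n' ∈ S → n' ≠ 0 → a0 + n' ∈ S := by
    intro n' hn' hn'0
    have ha0C : a0 ∈ coneN S \ S := hD ha0
    -- a0 + n' ∈ coneN S
    have hmemC : a0 + n' ∈ coneN S := by
      have h1 : toQ a0 ∈ coneQ (toQ '' S) := ha0C.1
      have h2 : toQ n' ∈ coneQ (toQ '' S) :=
        ⟨1, fun _ => 1, fun _ => toQ n', fun _ => zero_le_one,
          fun _ => ⟨n', hn', rfl⟩, by simp⟩
      have : toQ (a0 + n') = toQ a0 + toQ n' := by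
        funext i; simp [toQ]
      simpa [coneN, this] using coneQ_add h1 h2
    -- normSq strictly increases
    have hns : normSq a0 < normSq (a0 + n') := by
      have h0 : n' 0 ≠ 0 ∨ n' 1 ≠ 0 := by
        by_contra h
        push_neg at h
        apply hn'0
        funext i
        fin_cases i <;> simp [h.1, h.2]
      simp only [normSq, Pi.add_apply]
      rcases h0 with h | h
      · have h1 : a0 0 ^ 2 < (a0 0 + n' 0) ^ 2 :=
          Nat.pow_lt_pow_left (by omega) (by norm_num)
        have h2 : a0 1 ^ 2 ≤ (a0 1 + n' 1) ^ 2 :=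
          Nat.pow_le_pow_left (Nat.le_add_right _ _) 2
        omega
      · have h1 : a0 1 ^ 2 < (a0 1 + n' 1) ^ 2 :=
          Nat.pow_lt_pow_left (by omega) (by norm_num)
        have h2 : a0 0 ^ 2 ≤ (a0 0 + n' 0) ^ 2 :=
          Nat.pow_le_pow_left (Nat.le_add_right _ _) 2
        omega
    by_contra hnot
    exact absurd (hmax _ (hall ⟨hmemC, hnot⟩)) (by omega)
  have h1 : a0 + n1' ∈ S := key n1' hn1.1 hn10
  have h2 : a0 + n2' ∈ S := key n2' hn2.1 hn20
  exact ⟨h1, h2, fun h => by rcases h a0 (hD ha0) with h' | h' <;> exact h' ‹_›⟩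
end
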